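/- arXiv:math/0409194 — 5 statements merged into one kernel-verified Lean document; each statement's English description precedes it below -/
import Mathlib

section
/- Saturation of the cascade sets for low-mode forcing (Lemma 16.2, first bullet, 𝒵 version): Suppose 𝒵₀ ⊆ ℤ²_* and either {(0,1),(1,1)} ⊆ 𝒵₀ or {(1,0),(1,1)} ⊆ 𝒵₀. Then 𝒵_∞ = ℤ²_*; that is, every k ∈ ℤ² with k₂ ≥ 0 and k ≠ 0 belongs to 𝒵ₙ for some n. -/
/-- The set `ℤ²_* = {k ∈ ℤ² : k₂ ≥ 0, k ≠ 0}`. -/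
def Zstar : Set (ℤ × ℤ) := {k | 0 ≤ k.2 ∧ k ≠ 0}

/-- `ℓ^⊥ · j` where `ℓ^⊥ = (-ℓ₂, ℓ₁)`. -/
def perpDot (l j : ℤ × ℤ) : ℤ := -l.2 * j.1 + l.1 * j.2

/-- The squared Euclidean norm `|k|² = k₁² + k₂²`. -/
def normSq (k : ℤ × ℤ) : ℤ := k.1 ^ 2 + k.2 ^ 2

/-- The cascade sets `𝒵ₙ`: `𝒵₀ = Z0` and
`𝒵ₙ = 𝒵ₙ₋₁ ∪ {k ∈ ℤ²_* : k ∈ {ℓ+j, ℓ-j, j-ℓ}, j ∈ 𝒵₀, ℓ ∈ 𝒵ₙ₋₁,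
  ℓ^⊥·j ≠ 0, |j| ≠ |ℓ|}`. -/
def Zcascade (Z0 : Set (ℤ × ℤ)) : ℕ → Set (ℤ × ℤ)
  | 0 => Z0
  | n + 1 =>
      Zcascade Z0 n ∪
        {k | k ∈ Zstar ∧ ∃ j ∈ Z0, ∃ l ∈ Zcascade Z0 n,
          (k = l + j ∨ k = l - j ∨ k = j - l) ∧
          perpDot l j ≠ 0 ∧ normSq j ≠ normSq l}

namespace CascadeAux

variable {Z0 : Set (ℤ × ℤ)}

lemma mem_Zstar' {a b : ℤ} (hb : 0 ≤ b) (hab : ¬(a = 0 ∧ b = 0)) :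
    ((a, b) : ℤ × ℤ) ∈ Zstar := by
  refine ⟨hb, ?_⟩
  simp only [Ne, Prod.ext_iff, Prod.fst_zero, Prod.snd_zero]
  tauto

lemma one_le_sq {c : ℤ} (hc : c ≠ 0) : 1 ≤ c ^ 2 := by
  rcases hc.lt_or_gt with h | h <;> nlinarith

lemma mem0 {k : ℤ × ℤ} (hk : k ∈ Z0) : k ∈ ⋃ n, Zcascade Z0 n :=
  Set.mem_iUnion.2 ⟨0, hk⟩

lemma step {k j l : ℤ × ℤ} (hj : j ∈ Z0) (hl : l ∈ ⋃ n, Zcascade Z0 n)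
    (hk : k ∈ Zstar)
    (hkl : k = l + j ∨ k = l - j ∨ k = j - l)
    (h1 : perpDot l j ≠ 0) (h2 : normSq j ≠ normSq l) :
    k ∈ ⋃ n, Zcascade Z0 n := by
  obtain ⟨n, hn⟩ := Set.mem_iUnion.1 hl
  exact Set.mem_iUnion.2 ⟨n + 1, Or.inr ⟨hk, j, hj, l, hn, hkl, h1, h2⟩⟩

section Case1

variable (h01 : ((0:ℤ), (1:ℤ)) ∈ Z0) (h11 : ((1:ℤ), (1:ℤ)) ∈ Z0)

include h01 h11

/-- Column 1 above height 1. -/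
lemma col1' : ∀ b : ℕ, (((1:ℤ), (b:ℤ) + 1) : ℤ × ℤ) ∈ ⋃ n, Zcascade Z0 n := by
  intro b
  induction b with
  | zero => simpa using mem0 h11
  | succ b ih =>
      refine step h01 ih (mem_Zstar' (by omega) (by omega))
        (Or.inl ?_) ?_ ?_
      · simp [Prod.ext_iff]; try omega
      · simp [perpDot]
      · simp only [normSq]
        have : (0:ℤ) ≤ (b:ℤ) := Int.natCast_nonneg b
        nlinarith

lemma p10 : (((1:ℤ), (0:ℤ)) : ℤ × ℤ) ∈ ⋃ n, Zcascade Z0 n := by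
  refine step h01 (mem0 h11) (mem_Zstar' le_rfl (by omega))
    (Or.inr (Or.inl ?_)) ?_ ?_
  · simp [Prod.ext_iff]; try omega
  · simp [perpDot]
  · simp [normSq]

lemma col1 : ∀ b : ℕ, (((1:ℤ), (b:ℤ)) : ℤ × ℤ) ∈ ⋃ n, Zcascade Z0 n := by
  intro b
  cases b with
  | zero => simpa using p10 h01 h11
  | succ b => simpa [add_comm] using col1' h01 h11 b

/-- Move down in a column `c ≠ 0`, using `j = (0,1)`. -/
lemma down {c b : ℤ} (hc : c ≠ 0) (hb : 0 ≤ b)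
    (h : ((c, b + 1) : ℤ × ℤ) ∈ ⋃ n, Zcascade Z0 n) :
    ((c, b) : ℤ × ℤ) ∈ ⋃ n, Zcascade Z0 n := by
  refine step h01 h (mem_Zstar' hb (by omega)) (Or.inr (Or.inl ?_)) ?_ ?_
  · simp [Prod.ext_iff]; try omega
  · simpa [perpDot] using hc
  · simp only [normSq]
    have h1 : 1 ≤ c ^ 2 := one_le_sq hc
    nlinarith

lemma downMany {c : ℤ} (hc : c ≠ 0) :
    ∀ m : ℕ, ∀ b : ℤ, 0 ≤ b →
      ((c, b + (m:ℤ)) : ℤ × ℤ) ∈ ⋃ n, Zcascade Z0 n →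
      ((c, b) : ℤ × ℤ) ∈ ⋃ n, Zcascade Z0 n := by
  intro m
  induction m with
  | zero => intro b _ h; simpa using h
  | succ m ih =>
      intro b hb h
      refine down h01 h11 hc hb (ih (b + 1) (by omega) ?_)
      have : b + 1 + (m:ℤ) = b + ((m:ℕ) + 1 : ℕ) := by push_cast; ring
      rwa [this]

/-- All columns `c ≥ 1`. -/
lemma right : ∀ a : ℕ, ∀ b : ℕ,
    (((a:ℤ) + 1, (b:ℤ)) : ℤ × ℤ) ∈ ⋃ n, Zcascade Z0 n := by
  intro a
  induction a with
  | zero => intro b; simpa using col1 h01 h11 b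
  | succ a ih =>
      intro b
      have hseed : (((a:ℤ) + 2, (b:ℤ) + ((a:ℤ) + 3)) : ℤ × ℤ) ∈
          ⋃ n, Zcascade Z0 n := by
        refine step h11 (ih (b + a + 2)) (mem_Zstar' (by omega) (by omega))
          (Or.inl ?_) ?_ ?_
        · simp [Prod.ext_iff]; try omega
        · simp [perpDot]; omega
        · simp only [normSq]
          have ha : (0:ℤ) ≤ (a:ℤ) := Int.natCast_nonneg a
          have hb : (0:ℤ) ≤ (b:ℤ) := Int.natCast_nonneg b
          push_cast
          have h4 : ((b:ℤ) + (a:ℤ) + 2) ^ 2 ≥ 4 := by nlinarith [sq_nonneg ((b:ℤ) + (a:ℤ))]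
          nlinarith [sq_nonneg ((a:ℤ) + 1)]
      have := downMany h01 h11 (c := (a:ℤ) + 2) (by omega) (a + 3) (b:ℤ)
        (Int.natCast_nonneg b) (by push_cast at hseed ⊢; convert hseed using 3 <;> ring)
      simpa [show ((a:ℤ) + 1 + 1) = (a:ℤ) + 2 by ring] using this

/-- Column 0 above height 1. -/
lemma col0 : ∀ b : ℕ,
    (((0:ℤ), (b:ℤ) + 1) : ℤ × ℤ) ∈ ⋃ n, Zcascade Z0 n := by
  intro b
  refine step h11 (col1 h01 h11 (b + 2)) (mem_Zstar' (by omega) (by omega))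
    (Or.inr (Or.inl ?_)) ?_ ?_
  · simp [Prod.ext_iff]; try omega
  · simp [perpDot]; omega
  · simp only [normSq]
    have hb : (0:ℤ) ≤ (b:ℤ) := Int.natCast_nonneg b
    push_cast
    nlinarith

/-- All columns `c ≤ 0`, above height 1. -/
lemma left : ∀ a : ℕ, ∀ b : ℕ,
    ((-(a:ℤ), (b:ℤ) + 1) : ℤ × ℤ) ∈ ⋃ n, Zcascade Z0 n := by
  intro a
  induction a with
  | zero => intro b; simpa using col0 h01 h11 b
  | succ a ih =>
      intro b
      have hl := ih (b + 1)
      refine step h11 hl (mem_Zstar' (by omega) (by omega))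
        (Or.inr (Or.inl ?_)) ?_ ?_
      · simp [Prod.ext_iff]; try omega
      · simp [perpDot]; omega
      · simp only [normSq]
        have ha : (0:ℤ) ≤ (a:ℤ) := Int.natCast_nonneg a
        have hb : (0:ℤ) ≤ (b:ℤ) := Int.natCast_nonneg b
        push_cast
        nlinarith

/-- Negative axis points. -/
lemma leftAxis : ∀ a : ℕ,
    ((-(a:ℤ) - 1, (0:ℤ)) : ℤ × ℤ) ∈ ⋃ n, Zcascade Z0 n := by
  intro a
  refine down h01 h11 (c := -(a:ℤ) - 1) (by omega) le_rfl ?_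
  have h := left h01 h11 (a + 1) 0
  have e : (((-(((a:ℕ) + 1 : ℕ) : ℤ)), (((0:ℕ):ℤ) + 1)) : ℤ × ℤ)
      = ((-(a:ℤ) - 1, (0:ℤ) + 1) : ℤ × ℤ) := by
    simp only [Prod.mk.injEq]
    constructor <;> push_cast <;> ring
  rwa [e] at h

lemma case1 (k : ℤ × ℤ) (hk : k ∈ Zstar) : k ∈ ⋃ n, Zcascade Z0 n := by
  obtain ⟨x, y⟩ := k
  obtain ⟨hy, hne⟩ := hk
  simp only [Ne, Prod.ext_iff, Prod.fst_zero, Prod.snd_zero, not_and] at hne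
  simp only at hy
  rcases lt_trichotomy x 0 with hx | hx | hx
  · rcases eq_or_lt_of_le hy with hy0 | hy1
    · have := leftAxis h01 h11 (-x - 1).toNat
      have hx' : -((-x - 1).toNat : ℤ) - 1 = x := by omega
      rw [hx'] at this
      rwa [← hy0]
    · have := left h01 h11 (-x).toNat (y - 1).toNat
      have hx' : -(((-x).toNat : ℤ)) = x := by omega
      have hy' : (((y - 1).toNat : ℤ)) + 1 = y := by omega
      rwa [hx', hy'] at this
  · subst hx
    have hy1 : 1 ≤ y := by
      rcases eq_or_lt_of_le hy with h | h
      · exact absurd h.symm (hne rfl)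
      · omega
    have := col0 h01 h11 (y - 1).toNat
    have hy' : (((y - 1).toNat : ℤ)) + 1 = y := by omega
    rwa [hy'] at this
  · have := right h01 h11 (x - 1).toNat y.toNat
    have hx' : (((x - 1).toNat : ℤ)) + 1 = x := by omega
    have hy' : ((y.toNat : ℤ)) = y := Int.toNat_of_nonneg hy
    rwa [hx', hy'] at this

end Case1

section Case2

variable (h10 : ((1:ℤ), (0:ℤ)) ∈ Z0) (h11 : ((1:ℤ), (1:ℤ)) ∈ Z0)

include h10 h11

lemma row1R : ∀ a : ℕ,
    (((a:ℤ) + 1, (1:ℤ)) : ℤ × ℤ) ∈ ⋃ n, Zcascade Z0 n := by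
  intro a
  induction a with
  | zero => simpa using mem0 h11
  | succ a ih =>
      refine step h10 ih (mem_Zstar' (by omega) (by omega)) (Or.inl ?_) ?_ ?_
      · simp [Prod.ext_iff]; try omega
      · simp [perpDot]
      · simp only [normSq]
        have ha : (0:ℤ) ≤ (a:ℤ) := Int.natCast_nonneg a
        nlinarith

lemma q01 : (((0:ℤ), (1:ℤ)) : ℤ × ℤ) ∈ ⋃ n, Zcascade Z0 n := by
  refine step h10 (mem0 h11) (mem_Zstar' (by omega) (by omega))
    (Or.inr (Or.inl ?_)) ?_ ?_
  · simp [Prod.ext_iff]; try omega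
  · simp [perpDot]
  · simp [normSq]

lemma q12 : (((1:ℤ), (2:ℤ)) : ℤ × ℤ) ∈ ⋃ n, Zcascade Z0 n := by
  refine step h11 (q01 h10 h11) (mem_Zstar' (by omega) (by omega))
    (Or.inl ?_) ?_ ?_
  · simp [Prod.ext_iff]; try omega
  · simp [perpDot]
  · simp [normSq]

lemma q02 : (((0:ℤ), (2:ℤ)) : ℤ × ℤ) ∈ ⋃ n, Zcascade Z0 n := by
  refine step h10 (q12 h10 h11) (mem_Zstar' (by omega) (by omega))
    (Or.inr (Or.inl ?_)) ?_ ?_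
  · simp [Prod.ext_iff]; try omega
  · simp [perpDot]
  · simp [normSq]

lemma qm11 : (((-1:ℤ), (1:ℤ)) : ℤ × ℤ) ∈ ⋃ n, Zcascade Z0 n := by
  refine step h11 (q02 h10 h11) (mem_Zstar' (by omega) (by omega))
    (Or.inr (Or.inl ?_)) ?_ ?_
  · simp [Prod.ext_iff]; try omega
  · simp [perpDot]
  · simp [normSq]

lemma row1L : ∀ a : ℕ,
    ((-(a:ℤ) - 1, (1:ℤ)) : ℤ × ℤ) ∈ ⋃ n, Zcascade Z0 n := by
  intro a
  induction a with
  | zero => simpa using qm11 h10 h11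
  | succ a ih =>
      refine step h10 ih (mem_Zstar' (by omega) (by omega))
        (Or.inr (Or.inl ?_)) ?_ ?_
      · simp [Prod.ext_iff]; try omega
      · simp [perpDot]
      · simp only [normSq]
        have ha : (0:ℤ) ≤ (a:ℤ) := Int.natCast_nonneg a
        nlinarith

lemma row1 : ∀ a : ℤ, ((a, (1:ℤ)) : ℤ × ℤ) ∈ ⋃ n, Zcascade Z0 n := by
  intro a
  rcases lt_trichotomy a 0 with ha | ha | ha
  · have := row1L h10 h11 (-a - 1).toNat
    have ha' : -(((-a - 1).toNat : ℤ)) - 1 = a := by omega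
    rwa [ha'] at this
  · subst ha; exact q01 h10 h11
  · have := row1R h10 h11 (a - 1).toNat
    have ha' : (((a - 1).toNat : ℤ)) + 1 = a := by omega
    rwa [ha'] at this

/-- Move left in a row `y ≥ 2`, using `j = (1,0)`. -/
lemma stepL {x y : ℤ} (hy : 2 ≤ y)
    (h : ((x, y) : ℤ × ℤ) ∈ ⋃ n, Zcascade Z0 n) :
    ((x - 1, y) : ℤ × ℤ) ∈ ⋃ n, Zcascade Z0 n := by
  refine step h10 h (mem_Zstar' (by omega) (by omega)) (Or.inr (Or.inl ?_)) ?_ ?_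
  · simp [Prod.ext_iff]; try omega
  · simp [perpDot]; omega
  · simp only [normSq]; nlinarith [sq_nonneg x]

lemma stepR {x y : ℤ} (hy : 2 ≤ y)
    (h : ((x, y) : ℤ × ℤ) ∈ ⋃ n, Zcascade Z0 n) :
    ((x + 1, y) : ℤ × ℤ) ∈ ⋃ n, Zcascade Z0 n := by
  refine step h10 h (mem_Zstar' (by omega) (by omega)) (Or.inl ?_) ?_ ?_
  · simp [Prod.ext_iff]; try omega
  · simp [perpDot]; omega
  · simp only [normSq]; nlinarith [sq_nonneg x]

lemma manyL {y : ℤ} (hy : 2 ≤ y) : ∀ m : ℕ, ∀ x : ℤ,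
    ((x, y) : ℤ × ℤ) ∈ ⋃ n, Zcascade Z0 n →
    ((x - (m:ℤ), y) : ℤ × ℤ) ∈ ⋃ n, Zcascade Z0 n := by
  intro m
  induction m with
  | zero => intro x h; simpa using h
  | succ m ih =>
      intro x h
      have := stepL h10 h11 hy (ih x h)
      have he : x - (m:ℤ) - 1 = x - ((m:ℕ) + 1 : ℕ) := by push_cast; ring
      rwa [he] at this

lemma manyR {y : ℤ} (hy : 2 ≤ y) : ∀ m : ℕ, ∀ x : ℤ,
    ((x, y) : ℤ × ℤ) ∈ ⋃ n, Zcascade Z0 n →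
    ((x + (m:ℤ), y) : ℤ × ℤ) ∈ ⋃ n, Zcascade Z0 n := by
  intro m
  induction m with
  | zero => intro x h; simpa using h
  | succ m ih =>
      intro x h
      have := stepR h10 h11 hy (ih x h)
      have he : x + (m:ℤ) + 1 = x + ((m:ℕ) + 1 : ℕ) := by push_cast; ring
      rwa [he] at this

lemma rowfill {s y : ℤ} (hy : 2 ≤ y)
    (hs : ((s, y) : ℤ × ℤ) ∈ ⋃ n, Zcascade Z0 n) :
    ∀ a : ℤ, ((a, y) : ℤ × ℤ) ∈ ⋃ n, Zcascade Z0 n := by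
  intro a
  rcases le_total a s with h | h
  · have := manyL h10 h11 hy (s - a).toNat s hs
    have he : s - (((s - a).toNat : ℤ)) = a := by omega
    rwa [he] at this
  · have := manyR h10 h11 hy (a - s).toNat s hs
    have he : s + (((a - s).toNat : ℤ)) = a := by omega
    rwa [he] at this

lemma rows : ∀ b : ℕ, ∀ a : ℤ,
    ((a, (b:ℤ) + 1) : ℤ × ℤ) ∈ ⋃ n, Zcascade Z0 n := by
  intro b
  induction b with
  | zero => intro a; simpa using row1 h10 h11 a
  | succ b ih =>
      intro a
      have hseed : (((b:ℤ) + 3, (b:ℤ) + 2) : ℤ × ℤ) ∈ ⋃ n, Zcascade Z0 n := by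
        refine step h11 (ih ((b:ℤ) + 2)) (mem_Zstar' (by omega) (by omega))
          (Or.inl ?_) ?_ ?_
        · simp [Prod.ext_iff]; try omega
        · simp [perpDot]
        · simp only [normSq]
          have hb : (0:ℤ) ≤ (b:ℤ) := Int.natCast_nonneg b
          nlinarith
      have := rowfill h10 h11 (by omega : (2:ℤ) ≤ (b:ℤ) + 2) hseed a
      have he : (b:ℤ) + 2 = ((b:ℕ) + 1 : ℕ) + 1 := by push_cast; ring
      rwa [he] at this

lemma row0 : ∀ a : ℤ, a ≠ 0 →
    ((a, (0:ℤ)) : ℤ × ℤ) ∈ ⋃ n, Zcascade Z0 n := by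
  intro a ha
  by_cases ha2 : a = -2
  · subst ha2
    refine step h11 (row1 h10 h11 3) (mem_Zstar' le_rfl (by omega))
      (Or.inr (Or.inr ?_)) ?_ ?_
    · simp [Prod.ext_iff]; try omega
    · simp [perpDot]
    · simp [normSq]
  · refine step h11 (row1 h10 h11 (a + 1)) (mem_Zstar' le_rfl (by omega))
      (Or.inr (Or.inl ?_)) ?_ ?_
    · simp [Prod.ext_iff]; try omega
    · simp [perpDot]; omega
    · simp only [normSq]
      intro h
      have h3 : a + 1 = 0 ∨ a + 1 ≤ -2 ∨ 2 ≤ a + 1 := by omega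
      rcases h3 with h3 | h3 | h3 <;> nlinarith

lemma case2 (k : ℤ × ℤ) (hk : k ∈ Zstar) : k ∈ ⋃ n, Zcascade Z0 n := by
  obtain ⟨x, y⟩ := k
  obtain ⟨hy, hne⟩ := hk
  simp only [Ne, Prod.ext_iff, Prod.fst_zero, Prod.snd_zero, not_and] at hne
  simp only at hy
  rcases eq_or_lt_of_le hy with hy0 | hy1
  · have hx : x ≠ 0 := by
      intro h; exact hne h hy0.symm
    have := row0 h10 h11 x hx
    rwa [← hy0]
  · have := rows h10 h11 (y - 1).toNat x
    have hy' : (((y - 1).toNat : ℤ)) + 1 = y := by omega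
    rwa [hy'] at this

end Case2

lemma union_subset_Zstar (hZ0 : Z0 ⊆ Zstar) :
    (⋃ n, Zcascade Z0 n) ⊆ Zstar := by
  refine Set.iUnion_subset ?_
  intro n
  induction n with
  | zero => exact hZ0
  | succ n ih =>
      intro k hk
      rcases hk with h | h
      · exact ih h
      · exact h.1

end CascadeAux

/-- Saturation of the cascade sets for low-mode forcing (Lemma 16.2, first
bullet, `𝒵` version): if `{(0,1),(1,1)} ⊆ 𝒵₀` or `{(1,0),(1,1)} ⊆ 𝒵₀` then
`𝒵_∞ = ℤ²_*`. -/
theorem cascade_saturates_lowModes (Z0 : Set (ℤ × ℤ)) (hZ0 : Z0 ⊆ Zstar)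
    (hforce :
      ({((0:ℤ), (1:ℤ)), ((1:ℤ), (1:ℤ))} : Set (ℤ × ℤ)) ⊆ Z0 ∨
      ({((1:ℤ), (0:ℤ)), ((1:ℤ), (1:ℤ))} : Set (ℤ × ℤ)) ⊆ Z0) :
    (⋃ n, Zcascade Z0 n) = Zstar := by
  apply Set.Subset.antisymm (CascadeAux.union_subset_Zstar hZ0)
  intro k hk
  rcases hforce with h | h
  · exact CascadeAux.case1 (h (by simp)) (h (by simp)) k hk
  · exact CascadeAux.case2 (h (by simp)) (h (by simp)) k hk
end

section
/- Saturation of the cascade sets for well-separated axis forcing (Lemma 16.2, second bullet, 𝒵 version): Let M, K ∈ ℕ with M > 2, K > 2 and |M − K| > 2. Suppose 𝒵₀ ⊆ ℤ²_* and {(M+1,0), (M,0), (0,K+1), (0,K)} ⊆ 𝒵₀. Then 𝒵_∞ = ℤ²_*; that is, every k ∈ ℤ² with k₂ ≥ 0 and k ≠ 0 belongs to 𝒵ₙ for some n. -/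
/-- Saturation of the cascade sets for well-separated axis forcing (Lemma 16.2,
second bullet, `𝒵` version): if `M, K > 2`, `|M - K| > 2` and
`{(M+1,0), (M,0), (0,K+1), (0,K)} ⊆ 𝒵₀`, then `𝒵_∞ = ℤ²_*`. -/
theorem cascade_saturates_axisForcing (M K : ℕ)
    (hM : 2 < M) (hK : 2 < K) (hMK : 2 < |(M : ℤ) - (K : ℤ)|)
    (Z0 : Set (ℤ × ℤ)) (hZ0 : Z0 ⊆ Zstar)
    (hforce : ({(((M : ℤ) + 1), (0:ℤ)), ((M : ℤ), (0:ℤ)),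
        ((0:ℤ), ((K : ℤ) + 1)), ((0:ℤ), (K : ℤ))} : Set (ℤ × ℤ)) ⊆ Z0) :
    (⋃ n, Zcascade Z0 n) = Zstar := by
  have hMz : (2:ℤ) < (M:ℤ) := by exact_mod_cast hM
  have hKz : (2:ℤ) < (K:ℤ) := by exact_mod_cast hK
  have hM0 : (M:ℤ) ≠ 0 := by linarith
  have hK0 : (K:ℤ) ≠ 0 := by linarith
  have hMKne : (M:ℤ) ≠ (K:ℤ) := by
    intro h; rw [h] at hMK; simp at hMK
  set U : Set (ℤ × ℤ) := ⋃ n, Zcascade Z0 n with hUdef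
  -- forward inclusion
  have hsub : ∀ n, Zcascade Z0 n ⊆ Zstar := by
    intro n
    induction n with
    | zero => exact hZ0
    | succ n ih =>
        intro k hk
        rcases hk with h | h
        · exact ih h
        · exact h.1
  -- basic step machinery
  have hZ0U : Z0 ⊆ U := fun k hk => Set.mem_iUnion.mpr ⟨0, hk⟩
  have step : ∀ l j k : ℤ × ℤ, l ∈ U → j ∈ Z0 →
      (k = l + j ∨ k = l - j ∨ k = j - l) → k ∈ Zstar →
      perpDot l j ≠ 0 → normSq j ≠ normSq l → k ∈ U := by
    intro l j k hl hj hk hkZ hp hn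
    obtain ⟨n, hln⟩ := Set.mem_iUnion.mp hl
    exact Set.mem_iUnion.mpr ⟨n + 1, Or.inr ⟨hkZ, j, hj, l, hln, hk, hp, hn⟩⟩
  have memZ : ∀ x y : ℤ, 0 ≤ y → ¬(x = 0 ∧ y = 0) → ((x, y) : ℤ × ℤ) ∈ Zstar := by
    intro x y h1 h2
    refine ⟨h1, ?_⟩
    simp only [ne_eq, Prod.mk_eq_zero]
    exact h2
  -- generators
  have hjM : ((M:ℤ), (0:ℤ)) ∈ Z0 := hforce (by simp)
  have hjM1 : ((M:ℤ) + 1, (0:ℤ)) ∈ Z0 := hforce (by simp)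
  have hjK : ((0:ℤ), (K:ℤ)) ∈ Z0 := hforce (by simp)
  have hjK1 : ((0:ℤ), (K:ℤ) + 1) ∈ Z0 := hforce (by simp)
  -- horizontal step
  have stepH : ∀ x y m : ℤ, ((m, (0:ℤ)) ∈ Z0) → ((x, y) : ℤ × ℤ) ∈ U → y ≠ 0 → 0 ≤ y →
      m ≠ 0 → x ^ 2 + y ^ 2 ≠ m ^ 2 →
      (((x + m, y) : ℤ × ℤ) ∈ U ∧ ((x - m, y) : ℤ × ℤ) ∈ U) := by
    intro x y m hm hxy hy hy0 hm0 hnorm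
    have hperp : perpDot (x, y) (m, 0) ≠ 0 := by
      have e : perpDot (x, y) (m, 0) = -(y * m) := by simp [perpDot]
      rw [e]
      exact neg_ne_zero.mpr (mul_ne_zero hy hm0)
    have hns : normSq ((m : ℤ), 0) ≠ normSq (x, y) := by
      simp only [normSq]
      intro h
      exact hnorm (by linarith)
    constructor
    · refine step (x, y) (m, 0) (x + m, y) hxy hm (Or.inl ?_) (memZ _ _ hy0 ?_) hperp hns
      · simp [Prod.ext_iff]
      · intro h; exact hy h.2
    · refine step (x, y) (m, 0) (x - m, y) hxy hm (Or.inr (Or.inl ?_)) (memZ _ _ hy0 ?_) hperp hns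
      · simp [Prod.ext_iff]
      · intro h; exact hy h.2
  -- vertical step
  have stepV : ∀ x y m : ℤ, (((0:ℤ), m) ∈ Z0) → ((x, y) : ℤ × ℤ) ∈ U → x ≠ 0 →
      m ≠ 0 → x ^ 2 + y ^ 2 ≠ m ^ 2 →
      ((0 ≤ y + m → ((x, y + m) : ℤ × ℤ) ∈ U) ∧
       (0 ≤ y - m → ((x, y - m) : ℤ × ℤ) ∈ U)) := by
    intro x y m hm hxy hx hm0 hnorm
    have hperp : perpDot (x, y) (0, m) ≠ 0 := by
      have e : perpDot (x, y) (0, m) = x * m := by simp [perpDot]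
      rw [e]
      exact mul_ne_zero hx hm0
    have hns : normSq ((0 : ℤ), m) ≠ normSq (x, y) := by
      simp only [normSq]
      intro h
      exact hnorm (by linarith)
    constructor
    · intro hyp
      refine step (x, y) (0, m) (x, y + m) hxy hm (Or.inl ?_) (memZ _ _ hyp ?_) hperp hns
      · simp [Prod.ext_iff]
      · intro h; exact hx h.1
    · intro hyp
      refine step (x, y) (0, m) (x, y - m) hxy hm (Or.inr (Or.inl ?_)) (memZ _ _ hyp ?_) hperp hns
      · simp [Prod.ext_iff]
      · intro h; exact hx h.1
  -- anchor (M, K)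
  have anchor : (((M:ℤ), (K:ℤ)) : ℤ × ℤ) ∈ U := by
    have hperp : perpDot ((M:ℤ), 0) (0, (K:ℤ)) ≠ 0 := by
      have e : perpDot ((M:ℤ), 0) (0, (K:ℤ)) = M * K := by simp [perpDot]
      rw [e]
      exact mul_ne_zero hM0 hK0
    have hns : normSq ((0:ℤ), (K:ℤ)) ≠ normSq ((M:ℤ), 0) := by
      simp only [normSq]
      intro h
      have h2 : ((K:ℤ) - M) * ((K:ℤ) + M) = 0 := by ring_nf; linarith
      rcases mul_eq_zero.mp h2 with h3 | h3
      · exact hMKne (by linarith)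
      · linarith
    refine step ((M:ℤ), 0) (0, (K:ℤ)) ((M:ℤ), (K:ℤ)) (hZ0U hjM) hjK (Or.inl ?_)
      (memZ _ _ (by linarith) ?_) hperp hns
    · simp [Prod.ext_iff]
    · intro h; exact hM0 h.1
  -- climb: (M, (s+1)K)
  have vert0 : ∀ s : ℕ, (((M:ℤ), ((s:ℤ) + 1) * K) : ℤ × ℤ) ∈ U := by
    intro s
    induction s with
    | zero => simpa using anchor
    | succ s ih =>
        have hs : (0:ℤ) ≤ (s:ℤ) := Int.ofNat_nonneg s
        have hbig : (K:ℤ) ≤ ((s:ℤ) + 1) * K := by nlinarith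
        have hbig2 : (K:ℤ) ^ 2 ≤ (((s:ℤ) + 1) * K) ^ 2 :=
          pow_le_pow_left₀ (by linarith) hbig 2
        have h1 := (stepV M (((s:ℤ) + 1) * K) K hjK ih hM0 hK0
          (by intro h; nlinarith [hbig2])).1 (by linarith)
        have e : ((s:ℤ) + 1) * K + K = (((s + 1 : ℕ) : ℤ) + 1) * K := by push_cast; ring
        rwa [e] at h1
  -- vertical ±1 moves (at any x ≠ 0, high enough)
  have vplus1 : ∀ x y : ℤ, x ≠ 0 → (K:ℤ) + 1 ≤ y → ((x, y) : ℤ × ℤ) ∈ U →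
      ((x, y + 1) : ℤ × ℤ) ∈ U := by
    intro x y hx hy hxy
    have hx2 : 0 < x ^ 2 := by positivity
    have e1 : ((K:ℤ) + 1) ^ 2 ≤ y ^ 2 := pow_le_pow_left₀ (by linarith) hy 2
    have e2 : (K:ℤ) ^ 2 ≤ (y + ((K:ℤ) + 1)) ^ 2 :=
      pow_le_pow_left₀ (by linarith) (by linarith) 2
    have h1 := (stepV x y ((K:ℤ) + 1) hjK1 hxy hx (by linarith)
      (by intro h; linarith)).1 (by linarith)
    have h2 := (stepV x (y + ((K:ℤ) + 1)) K hjK h1 hx hK0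
      (by intro h; linarith)).2 (by linarith)
    have e : y + ((K:ℤ) + 1) - K = y + 1 := by ring
    rwa [e] at h2
  have vminus1 : ∀ x y : ℤ, x ≠ 0 → (K:ℤ) + 2 ≤ y → ((x, y) : ℤ × ℤ) ∈ U →
      ((x, y - 1) : ℤ × ℤ) ∈ U := by
    intro x y hx hy hxy
    have hx2 : 0 < x ^ 2 := by positivity
    have e1 : (K:ℤ) ^ 2 ≤ y ^ 2 := pow_le_pow_left₀ (by linarith) (by linarith) 2
    have e2 : ((K:ℤ) + 1) ^ 2 ≤ (y + (K:ℤ)) ^ 2 :=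
      pow_le_pow_left₀ (by linarith) (by linarith) 2
    have h1 := (stepV x y (K:ℤ) hjK hxy hx hK0
      (by intro h; linarith)).1 (by linarith)
    have h2 := (stepV x (y + (K:ℤ)) ((K:ℤ) + 1) hjK1 h1 hx (by linarith)
      (by intro h; linarith)).2 (by linarith)
    have e : y + (K:ℤ) - ((K:ℤ) + 1) = y - 1 := by ring
    rwa [e] at h2
  -- all (M, y) with y ≥ K+1
  have vertAll : ∀ y : ℤ, (K:ℤ) + 1 ≤ y → (((M:ℤ), y) : ℤ × ℤ) ∈ U := by
    have base : (((M:ℤ), 2 * (K:ℤ)) : ℤ × ℤ) ∈ U := by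
      have := vert0 1
      have e : (((1:ℕ):ℤ) + 1) * K = 2 * (K:ℤ) := by push_cast; ring
      rwa [e] at this
    intro y hy
    rcases le_or_gt (2 * (K:ℤ)) y with h | h
    · have up : ∀ t : ℕ, (((M:ℤ), 2 * (K:ℤ) + (t:ℤ)) : ℤ × ℤ) ∈ U := by
        intro t
        induction t with
        | zero => simpa using base
        | succ t ih =>
            have ht : (0:ℤ) ≤ (t:ℤ) := Int.ofNat_nonneg t
            have := vplus1 M (2 * (K:ℤ) + t) hM0 (by linarith) ih
            have e : 2 * (K:ℤ) + (t:ℤ) + 1 = 2 * (K:ℤ) + ((t + 1 : ℕ) : ℤ) := by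
              push_cast; ring
            rwa [e] at this
      have h0 : (0:ℤ) ≤ y - 2 * K := by linarith
      have e := up (y - 2 * K).toNat
      rw [Int.toNat_of_nonneg h0] at e
      have e2 : 2 * (K:ℤ) + (y - 2 * K) = y := by ring
      rwa [e2] at e
    · have down : ∀ t : ℕ, (t:ℤ) ≤ (K:ℤ) - 1 → (((M:ℤ), 2 * (K:ℤ) - (t:ℤ)) : ℤ × ℤ) ∈ U := by
        intro t
        induction t with
        | zero => intro _; simpa using base
        | succ t ih =>
            intro ht
            have htc : ((t:ℤ)) + 1 ≤ (K:ℤ) - 1 := by push_cast at ht; linarith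
            have ht0 : (0:ℤ) ≤ (t:ℤ) := Int.ofNat_nonneg t
            have hprev := ih (by linarith)
            have := vminus1 M (2 * (K:ℤ) - t) hM0 (by linarith) hprev
            have e : 2 * (K:ℤ) - (t:ℤ) - 1 = 2 * (K:ℤ) - ((t + 1 : ℕ) : ℤ) := by
              push_cast; ring
            rwa [e] at this
      have h0 : (0:ℤ) ≤ 2 * K - y := by linarith
      have e := down (2 * K - y).toNat (by rw [Int.toNat_of_nonneg h0]; linarith)
      rw [Int.toNat_of_nonneg h0] at e
      have e2 : 2 * (K:ℤ) - (2 * K - y) = y := by ring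
      rwa [e2] at e
  -- horizontal ±1 moves at high altitude
  have hplus1 : ∀ x y : ℤ, (M:ℤ) + 2 ≤ y → ((x, y) : ℤ × ℤ) ∈ U →
      ((x + 1, y) : ℤ × ℤ) ∈ U := by
    intro x y hy hxy
    have hy0 : (0:ℤ) < y := by linarith
    have e1 : ((M:ℤ) + 1) ^ 2 < y ^ 2 := by nlinarith
    have e2 : (M:ℤ) ^ 2 < y ^ 2 := by nlinarith
    have h1 := (stepH x y ((M:ℤ) + 1) hjM1 hxy (by linarith) (by linarith) (by linarith)
      (by intro h; nlinarith [sq_nonneg x])).1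
    have h2 := (stepH (x + ((M:ℤ) + 1)) y (M:ℤ) hjM h1 (by linarith) (by linarith) hM0
      (by intro h; nlinarith [sq_nonneg (x + ((M:ℤ) + 1))])).2
    have e : x + ((M:ℤ) + 1) - M = x + 1 := by ring
    rwa [e] at h2
  have hminus1 : ∀ x y : ℤ, (M:ℤ) + 2 ≤ y → ((x, y) : ℤ × ℤ) ∈ U →
      ((x - 1, y) : ℤ × ℤ) ∈ U := by
    intro x y hy hxy
    have hy0 : (0:ℤ) < y := by linarith
    have e1 : ((M:ℤ) + 1) ^ 2 < y ^ 2 := by nlinarith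
    have e2 : (M:ℤ) ^ 2 < y ^ 2 := by nlinarith
    have h1 := (stepH x y (M:ℤ) hjM hxy (by linarith) (by linarith) hM0
      (by intro h; nlinarith [sq_nonneg x])).1
    have h2 := (stepH (x + (M:ℤ)) y ((M:ℤ) + 1) hjM1 h1 (by linarith) (by linarith)
      (by linarith) (by intro h; nlinarith [sq_nonneg (x + (M:ℤ))])).2
    have e : x + (M:ℤ) - ((M:ℤ) + 1) = x - 1 := by ring
    rwa [e] at h2
  -- everything at high altitude
  have highAll : ∀ x y : ℤ, (M:ℤ) + 2 ≤ y → (K:ℤ) + 1 ≤ y → ((x, y) : ℤ × ℤ) ∈ U := by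
    intro x y hy1 hy2
    have base := vertAll y hy2
    rcases le_or_gt (M:ℤ) x with h | h
    · have up : ∀ t : ℕ, (((M:ℤ) + (t:ℤ), y) : ℤ × ℤ) ∈ U := by
        intro t
        induction t with
        | zero => simpa using base
        | succ t ih =>
            have := hplus1 ((M:ℤ) + t) y hy1 ih
            have e : (M:ℤ) + (t:ℤ) + 1 = (M:ℤ) + ((t + 1 : ℕ) : ℤ) := by push_cast; ring
            rwa [e] at this
      have h0 : (0:ℤ) ≤ x - M := by linarith
      have e := up (x - M).toNat
      rw [Int.toNat_of_nonneg h0] at e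
      have e2 : (M:ℤ) + (x - M) = x := by ring
      rwa [e2] at e
    · have down : ∀ t : ℕ, (((M:ℤ) - (t:ℤ), y) : ℤ × ℤ) ∈ U := by
        intro t
        induction t with
        | zero => simpa using base
        | succ t ih =>
            have := hminus1 ((M:ℤ) - t) y hy1 ih
            have e : (M:ℤ) - (t:ℤ) - 1 = (M:ℤ) - ((t + 1 : ℕ) : ℤ) := by push_cast; ring
            rwa [e] at this
      have h0 : (0:ℤ) ≤ (M:ℤ) - x := by linarith
      have e := down ((M:ℤ) - x).toNat
      rw [Int.toNat_of_nonneg h0] at e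
      have e2 : (M:ℤ) - ((M:ℤ) - x) = x := by ring
      rwa [e2] at e
  -- descent
  have desc : ∀ a b : ℤ, a ≠ 0 → 1 ≤ b → ∀ s : ℕ,
      ((a, b + (s:ℤ) * K) : ℤ × ℤ) ∈ U → ((a, b) : ℤ × ℤ) ∈ U := by
    intro a b ha hb s
    induction s with
    | zero => intro h; simpa using h
    | succ s ih =>
        intro h
        have hs : (0:ℤ) ≤ (s:ℤ) := Int.ofNat_nonneg s
        have hsk : (0:ℤ) ≤ (s:ℤ) * K := mul_nonneg hs (by linarith)
        have hyc : (K:ℤ) + 1 ≤ b + ((s + 1 : ℕ) : ℤ) * K := by push_cast; linarith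
        have esq : (K:ℤ) ^ 2 ≤ (b + ((s + 1 : ℕ) : ℤ) * K) ^ 2 :=
          pow_le_pow_left₀ (by linarith) (by linarith) 2
        have ha2 : 0 < a ^ 2 := by positivity
        have h2 := (stepV a (b + ((s + 1 : ℕ) : ℤ) * K) K hjK h ha hK0
          (by intro hh; linarith)).2 (by linarith)
        have e : b + ((s + 1 : ℕ) : ℤ) * K - K = b + (s:ℤ) * K := by push_cast; ring
        rw [e] at h2
        exact ih h2
  -- interior points
  have main1 : ∀ a b : ℤ, a ≠ 0 → 1 ≤ b → ((a, b) : ℤ × ℤ) ∈ U := by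
    intro a b ha hb
    set s : ℕ := M + K + 2 with hs
    have hsK : (M:ℤ) + K + 2 ≤ (s:ℤ) * K := by
      have e : ((s:ℕ):ℤ) = (M:ℤ) + K + 2 := by rw [hs]; push_cast; ring
      rw [e]
      have h1 : (1:ℤ) ≤ K := by linarith
      nlinarith
    have high := highAll a (b + (s:ℤ) * K) (by linarith) (by linarith)
    exact desc a b ha hb s high
  -- vertical axis
  have axisY : ∀ b : ℤ, 1 ≤ b → (((0:ℤ), b) : ℤ × ℤ) ∈ U := by
    intro b hb
    have h1 := main1 (M:ℤ) b hM0 hb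
    have hb2 : 0 < b ^ 2 := by positivity
    have h2 := (stepH (M:ℤ) b (M:ℤ) hjM h1 (by linarith) (by linarith) hM0
      (by intro h; linarith)).2
    have e : (M:ℤ) - M = 0 := by ring
    rwa [e] at h2
  -- horizontal axis
  have axisX : ∀ a : ℤ, a ≠ 0 → ((a, (0:ℤ)) : ℤ × ℤ) ∈ U := by
    intro a ha
    have h1 := main1 a (K:ℤ) ha (by linarith)
    have ha2 : 0 < a ^ 2 := by positivity
    have h2 := (stepV a (K:ℤ) (K:ℤ) hjK h1 ha hK0
      (by intro h; linarith)).2 (by linarith)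
    have e : (K:ℤ) - K = 0 := by ring
    rwa [e] at h2
  -- conclusion
  apply Set.Subset.antisymm
  · exact Set.iUnion_subset hsub
  · rintro ⟨a, b⟩ ⟨hb, hne⟩
    simp only [ne_eq, Prod.mk_eq_zero, not_and] at hne
    rcases eq_or_lt_of_le hb with hb0 | hb1
    · have hb0' : b = 0 := hb0.symm
      subst hb0'
      have ha : a ≠ 0 := by
        intro h; exact hne h rfl
      exact axisX a ha
    · by_cases ha : a = 0
      · subst ha
        exact axisY b (by linarith)
      · exact main1 a b ha (by linarith)
end

section
/- Backward Gronwall estimate with logarithmic envelope (the quantitative core of Lemma 11.1, part 2): Let T < 0, let a : [T,0] → [0,∞) be integrable with ∫ₜ⁰ a(s) ds ≤ C₁|t| + n(1 + log(1+|t|)) for all t ∈ [T,0], and let ρ : [T,0] → [0,∞) be absolutely continuous with ρ′(t) ≤ (−c₁ + c·a(t)) ρ(t) for almost every t ∈ [T,0]. Then ρ(0) ≤ ρ(T) · e^{cn} · (1+|T|)^{cn} · e^{−(c₁ − cC₁)|T|}. -/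
open MeasureTheory Set

namespace BGLE
open Nat

lemma inter_Iic {T t s : ℝ} (hs : s ≤ t) : Iic s ∩ Ioc T t = Ioc T s := by
  ext x
  simp only [mem_inter_iff, mem_Iic, mem_Ioc]
  exact ⟨fun ⟨h1, h2, _⟩ => ⟨h2, h1⟩, fun ⟨h1, h2⟩ => ⟨h2, h1, h2.trans hs⟩⟩

lemma inter_Iio {T t u : ℝ} (hu : u ≤ t) : Iio u ∩ Ioc T t = Ioo T u := by
  ext x
  simp only [mem_inter_iff, mem_Iio, mem_Ioc, mem_Ioo]
  exact ⟨fun ⟨h1, h2, _⟩ => ⟨h2, h1⟩, fun ⟨h1, h2⟩ => ⟨h2, h1, h2.le.trans hu⟩⟩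

/-- Product rule for primitives, proved by Fubini on the square. -/
lemma prod_rule {T t : ℝ} (hTt : T ≤ t) {g h : ℝ → ℝ}
    (hg : IntegrableOn g (Ioc T t)) (hh : IntegrableOn h (Ioc T t)) :
    (∫ s in T..t, g s) * (∫ s in T..t, h s)
      = ∫ s in T..t, (g s * (∫ u in T..s, h u) + (∫ u in T..s, g u) * h s) := by
  set μ := volume.restrict (Ioc T t) with hμ
  have hS : MeasurableSet {p : ℝ × ℝ | p.2 ≤ p.1} :=
    measurableSet_le measurable_snd measurable_fst
  have hS' : MeasurableSet {p : ℝ × ℝ | p.1 < p.2} :=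
    measurableSet_lt measurable_fst measurable_snd
  have hL : Integrable (fun p : ℝ × ℝ => g p.1 * h p.2) (μ.prod μ) := hg.mul_prod hh
  have hK : Integrable ({p : ℝ × ℝ | p.2 ≤ p.1}.indicator (fun p => g p.1 * h p.2)) (μ.prod μ) :=
    hL.indicator hS
  have hK' : Integrable ({p : ℝ × ℝ | p.1 < p.2}.indicator (fun p => g p.1 * h p.2)) (μ.prod μ) :=
    hL.indicator hS'
  have hKeq : ∫ p, ({p : ℝ × ℝ | p.2 ≤ p.1}.indicator (fun p => g p.1 * h p.2)) p ∂(μ.prod μ)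
      = ∫ s in Ioc T t, g s * (∫ u in T..s, h u) := by
    rw [MeasureTheory.integral_prod _ hK]
    apply setIntegral_congr_fun measurableSet_Ioc
    intro s hs
    have e1 : (fun u => ({p : ℝ × ℝ | p.2 ≤ p.1}.indicator (fun p => g p.1 * h p.2)) (s, u))
        = (Iic s).indicator (fun u => g s * h u) := by
      funext u
      by_cases hus : u ≤ s
      · rw [Set.indicator_of_mem (by simpa using hus), Set.indicator_of_mem (by simpa using hus)]
      · rw [Set.indicator_of_notMem (by simpa using hus),
          Set.indicator_of_notMem (by simpa using hus)]
    beta_reduce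
    rw [e1, integral_indicator measurableSet_Iic, hμ,
      Measure.restrict_restrict measurableSet_Iic, inter_Iic hs.2,
      MeasureTheory.integral_const_mul, ← intervalIntegral.integral_of_le hs.1.le]
  have hK'eq : ∫ p, ({p : ℝ × ℝ | p.1 < p.2}.indicator (fun p => g p.1 * h p.2)) p ∂(μ.prod μ)
      = ∫ u in Ioc T t, (∫ s in T..u, g s) * h u := by
    rw [MeasureTheory.integral_prod_symm _ hK']
    apply setIntegral_congr_fun measurableSet_Ioc
    intro u hu
    have e1 : (fun s => ({p : ℝ × ℝ | p.1 < p.2}.indicator (fun p => g p.1 * h p.2)) (s, u))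
        = (Iio u).indicator (fun s => g s * h u) := by
      funext s
      by_cases hsu : s < u
      · rw [Set.indicator_of_mem (by simpa using hsu), Set.indicator_of_mem (by simpa using hsu)]
      · rw [Set.indicator_of_notMem (by simpa using hsu),
          Set.indicator_of_notMem (by simpa using hsu)]
    beta_reduce
    rw [e1, integral_indicator measurableSet_Iio, hμ,
      Measure.restrict_restrict measurableSet_Iio, inter_Iio hu.2,
      ← MeasureTheory.integral_Ioc_eq_integral_Ioo,
      ← intervalIntegral.integral_of_le hu.1.le]
    simp [intervalIntegral.integral_mul_const]
  have hsplit : ∫ p, g p.1 * h p.2 ∂(μ.prod μ)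
      = (∫ p, ({p : ℝ × ℝ | p.2 ≤ p.1}.indicator (fun p => g p.1 * h p.2)) p ∂(μ.prod μ))
        + ∫ p, ({p : ℝ × ℝ | p.1 < p.2}.indicator (fun p => g p.1 * h p.2)) p ∂(μ.prod μ) := by
    rw [← integral_add hK hK']
    apply integral_congr_ae
    filter_upwards with p
    by_cases hp : p.2 ≤ p.1
    · rw [Set.indicator_of_mem (by simpa using hp),
        Set.indicator_of_notMem (by simpa using not_lt.2 hp), add_zero]
    · rw [Set.indicator_of_notMem (by simpa using hp),
        Set.indicator_of_mem (by simpa using lt_of_not_ge hp), zero_add]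
  have hGcont : ContinuousOn (fun s => ∫ u in T..s, g u) (uIcc T t) :=
    intervalIntegral.continuousOn_primitive_interval
      (by rwa [uIcc_of_le hTt, integrableOn_Icc_iff_integrableOn_Ioc])
  have hHcont : ContinuousOn (fun s => ∫ u in T..s, h u) (uIcc T t) :=
    intervalIntegral.continuousOn_primitive_interval
      (by rwa [uIcc_of_le hTt, integrableOn_Icc_iff_integrableOn_Ioc])
  have hgI : IntervalIntegrable g volume T t :=
    (intervalIntegrable_iff_integrableOn_Ioc_of_le hTt).2 hg
  have hhI : IntervalIntegrable h volume T t :=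
    (intervalIntegrable_iff_integrableOn_Ioc_of_le hTt).2 hh
  have i1 : IntervalIntegrable (fun s => g s * (∫ u in T..s, h u)) volume T t :=
    hgI.mul_continuousOn hHcont
  have i2 : IntervalIntegrable (fun s => (∫ u in T..s, g u) * h s) volume T t :=
    hhI.continuousOn_mul hGcont
  calc (∫ s in T..t, g s) * (∫ s in T..t, h s)
      = (∫ s, g s ∂μ) * (∫ s, h s ∂μ) := by
        rw [intervalIntegral.integral_of_le hTt, intervalIntegral.integral_of_le hTt]
    _ = ∫ p, g p.1 * h p.2 ∂(μ.prod μ) := (integral_prod_mul g h).symm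
    _ = (∫ s in Ioc T t, g s * (∫ u in T..s, h u))
        + ∫ u in Ioc T t, (∫ s in T..u, g s) * h u := by rw [hsplit, hKeq, hK'eq]
    _ = (∫ s in T..t, g s * (∫ u in T..s, h u)) + ∫ s in T..t, (∫ u in T..s, g u) * h s := by
        rw [intervalIntegral.integral_of_le hTt, intervalIntegral.integral_of_le hTt]
    _ = ∫ s in T..t, (g s * (∫ u in T..s, h u) + (∫ u in T..s, g u) * h s) :=
        (intervalIntegral.integral_add i1 i2).symm

/-- Product rule for primitives with initial values. -/
lemma prod_rule' {T t : ℝ} (hTt : T ≤ t) {g h : ℝ → ℝ}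
    (hg : IntervalIntegrable g volume T t) (hh : IntervalIntegrable h volume T t) (F0 G0 : ℝ) :
    (F0 + ∫ s in T..t, g s) * (G0 + ∫ s in T..t, h s)
      = F0 * G0 + ∫ s in T..t,
          (g s * (G0 + ∫ u in T..s, h u) + (F0 + ∫ u in T..s, g u) * h s) := by
  have hGcont : ContinuousOn (fun s => ∫ u in T..s, g u) (uIcc T t) :=
    intervalIntegral.continuousOn_primitive_interval
      (by rw [uIcc_of_le hTt, integrableOn_Icc_iff_integrableOn_Ioc]
          exact (intervalIntegrable_iff_integrableOn_Ioc_of_le hTt).1 hg)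
  have hHcont : ContinuousOn (fun s => ∫ u in T..s, h u) (uIcc T t) :=
    intervalIntegral.continuousOn_primitive_interval
      (by rw [uIcc_of_le hTt, integrableOn_Icc_iff_integrableOn_Ioc]
          exact (intervalIntegrable_iff_integrableOn_Ioc_of_le hTt).1 hh)
  have i0 : IntervalIntegrable (fun s => G0 * g s + F0 * h s) volume T t :=
    (hg.const_mul G0).add (hh.const_mul F0)
  have i1 : IntervalIntegrable (fun s => g s * (∫ u in T..s, h u)) volume T t :=
    hg.mul_continuousOn hHcont
  have i2 : IntervalIntegrable (fun s => (∫ u in T..s, g u) * h s) volume T t :=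
    hh.continuousOn_mul hGcont
  have e : ∀ s : ℝ, g s * (G0 + ∫ u in T..s, h u) + (F0 + ∫ u in T..s, g u) * h s
      = (G0 * g s + F0 * h s)
        + (g s * (∫ u in T..s, h u) + (∫ u in T..s, g u) * h s) := by
    intro s; ring
  rw [intervalIntegral.integral_congr (fun s _ => e s),
    intervalIntegral.integral_add i0 (i1.add i2),
    intervalIntegral.integral_add (hg.const_mul G0) (hh.const_mul F0),
    intervalIntegral.integral_const_mul, intervalIntegral.integral_const_mul,
    ← prod_rule hTt ((intervalIntegrable_iff_integrableOn_Ioc_of_le hTt).1 hg)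
      ((intervalIntegrable_iff_integrableOn_Ioc_of_le hTt).1 hh)]
  ring

/-- Power rule: `(∫_T^t b)^(k+1) = (k+1) ∫_T^t b (∫_T^s b)^k`. -/
lemma pow_rule {T : ℝ} (hT : T ≤ 0) {b : ℝ → ℝ}
    (hb : IntervalIntegrable b volume T 0) (k : ℕ) :
    ∀ t ∈ Icc T (0:ℝ), (∫ s in T..t, b s) ^ (k + 1)
      = (k + 1 : ℝ) * ∫ s in T..t, b s * (∫ u in T..s, b u) ^ k := by
  have hBcont : ContinuousOn (fun s => ∫ u in T..s, b u) (Icc T 0) := by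
    have := intervalIntegral.continuousOn_primitive_interval
      (f := b) (a := T) (b := (0:ℝ)) (μ := volume) ?_
    · rwa [uIcc_of_le hT] at this
    · rw [uIcc_of_le hT, integrableOn_Icc_iff_integrableOn_Ioc]
      exact (intervalIntegrable_iff_integrableOn_Ioc_of_le hT).1 hb
  induction k with
  | zero =>
    intro t ht
    simp only [pow_one, pow_zero, mul_one, Nat.cast_zero, zero_add, one_mul]
  | succ k ih =>
    intro t ht
    have hbt : IntervalIntegrable b volume T t :=
      hb.mono_set (by rw [uIcc_of_le ht.1, uIcc_of_le hT]; exact Icc_subset_Icc le_rfl ht.2)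
    have hsub : uIcc T t ⊆ Icc T 0 := by
      rw [uIcc_of_le ht.1]; exact Icc_subset_Icc le_rfl ht.2
    have hh : IntervalIntegrable (fun s => b s * (∫ u in T..s, b u) ^ k) volume T t :=
      hbt.mul_continuousOn (((hBcont.mono hsub).pow k))
    have key := prod_rule ht.1 ((intervalIntegrable_iff_integrableOn_Ioc_of_le ht.1).1 hbt)
      ((intervalIntegrable_iff_integrableOn_Ioc_of_le ht.1).1 hh)
    have ihs : ∀ s ∈ uIcc T t, (∫ u in T..s, b u * (∫ v in T..u, b v) ^ k)
        = (∫ u in T..s, b u) ^ (k + 1) / (k + 1 : ℝ) := by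
      intro s hs
      have := ih s (hsub hs)
      field_simp
      linarith [this]
    have keyr : (∫ s in T..t, b s) * ((∫ s in T..t, b s) ^ (k+1) / (k+1:ℝ))
        = ∫ s in T..t, ((1/(k+1:ℝ) + 1) * (b s * (∫ u in T..s, b u) ^ (k+1))) := by
      rw [← ihs t (by rw [uIcc_of_le ht.1]; exact ⟨ht.1, le_rfl⟩), key]
      apply intervalIntegral.integral_congr
      intro s hs
      beta_reduce
      rw [ihs s hs]
      ring
    rw [intervalIntegral.integral_const_mul] at keyr
    have hk1 : (k + 1 : ℝ) ≠ 0 := by positivity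
    have keyr2 : (∫ s in T..t, b s) * (∫ s in T..t, b s) ^ (k+1)
        = ((k:ℝ) + 1 + 1) * ∫ s in T..t, b s * (∫ u in T..s, b u) ^ (k + 1) := by
      field_simp at keyr
      linarith [keyr]
    push_cast
    rw [pow_succ, mul_comm ((∫ s in T..t, b s) ^ (k+1)) (∫ s in T..t, b s), keyr2]

/-- Chain rule for the exponential of a primitive, via the exponential series. -/
lemma exp_rule {T : ℝ} (hT : T ≤ 0) {b : ℝ → ℝ}
    (hb : IntervalIntegrable b volume T 0) :
    ∀ t ∈ Icc T (0:ℝ), Real.exp (∫ s in T..t, b s)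
      = 1 + ∫ s in T..t, b s * Real.exp (∫ u in T..s, b u) := by
  have hexp : ∀ x : ℝ, HasSum (fun k : ℕ => x ^ k / k !) (Real.exp x) := fun x => by
    rw [Real.exp_eq_exp_ℝ]; exact NormedSpace.expSeries_div_hasSum_exp x
  have hBcont : ContinuousOn (fun s => ∫ u in T..s, b u) (Icc T 0) := by
    have := intervalIntegral.continuousOn_primitive_interval
      (f := b) (a := T) (b := (0:ℝ)) (μ := volume) ?_
    · rwa [uIcc_of_le hT] at this
    · rw [uIcc_of_le hT, integrableOn_Icc_iff_integrableOn_Ioc]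
      exact (intervalIntegrable_iff_integrableOn_Ioc_of_le hT).1 hb
  obtain ⟨M, hM⟩ : ∃ M : ℝ, ∀ s ∈ Icc T (0:ℝ), |∫ u in T..s, b u| ≤ M := by
    obtain ⟨M, hM⟩ := isCompact_Icc.exists_bound_of_continuousOn hBcont
    exact ⟨M, fun s hs => by simpa [Real.norm_eq_abs] using hM s hs⟩
  intro t ht
  have hbt : IntervalIntegrable b volume T t :=
    hb.mono_set (by rw [uIcc_of_le ht.1, uIcc_of_le hT]; exact Icc_subset_Icc le_rfl ht.2)
  have hsub : uIcc T t ⊆ Icc T 0 := by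
    rw [uIcc_of_le ht.1]; exact Icc_subset_Icc le_rfl ht.2
  set F : ℕ → ℝ → ℝ := fun k s => b s * (∫ u in T..s, b u) ^ k / k ! with hF
  have hFI : ∀ k : ℕ, IntervalIntegrable (F k) volume T t := fun k =>
    (hbt.mul_continuousOn ((hBcont.mono hsub).pow k)).div_const _
  have hFint : ∀ k : ℕ, Integrable (F k) (volume.restrict (Ioc T t)) := fun k =>
    (intervalIntegrable_iff_integrableOn_Ioc_of_le ht.1).1 (hFI k)
  have habs : IntegrableOn (fun s => |b s|) (Ioc T t) :=
    (intervalIntegrable_iff_integrableOn_Ioc_of_le ht.1).1 hbt.abs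
  have hnorm : ∀ k : ℕ, (∫ s in Ioc T t, ‖F k s‖)
      ≤ (∫ s in Ioc T t, |b s|) * (M ^ k / k !) := by
    intro k
    rw [← integral_mul_const]
    apply setIntegral_mono_on ((hFint k).norm) (habs.mul_const _) measurableSet_Ioc
    intro s hs
    have hsI : s ∈ Icc T (0:ℝ) := ⟨hs.1.le, hs.2.trans ht.2⟩
    have h1 : |(∫ u in T..s, b u)| ^ k ≤ M ^ k :=
      pow_le_pow_left₀ (abs_nonneg _) (hM s hsI) k
    have hk : (0:ℝ) < k ! := by positivity
    rw [Real.norm_eq_abs, hF]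
    rw [abs_div, abs_mul, abs_pow]
    rw [abs_of_pos hk]
    rw [div_le_iff₀ hk] at *
    calc |b s| * |(∫ u in T..s, b u)| ^ k ≤ |b s| * M ^ k := by
          exact mul_le_mul_of_nonneg_left h1 (abs_nonneg _)
      _ = |b s| * (M ^ k / k !) * k ! := by field_simp
  have hsummable : Summable (fun k : ℕ => ∫ s in Ioc T t, ‖F k s‖) := by
    apply Summable.of_nonneg_of_le (fun k => integral_nonneg (fun s => norm_nonneg _)) hnorm
    exact (Real.summable_pow_div_factorial M).mul_left _
  have hsum := hasSum_integral_of_summable_integral_norm hFint hsummable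
  have htsum : ∀ s : ℝ, ∑' k : ℕ, F k s = b s * Real.exp (∫ u in T..s, b u) := by
    intro s
    have h1 := (hexp (∫ u in T..s, b u)).mul_left (b s)
    have h2 : (fun k : ℕ => b s * ((∫ u in T..s, b u) ^ k / k !)) = fun k => F k s := by
      funext k; rw [hF]; ring
    rw [← h1.tsum_eq, h2]
  have hterm : ∀ k : ℕ, (∫ s, F k s ∂(volume.restrict (Ioc T t)))
      = (∫ s in T..t, b s) ^ (k+1) / (k+1)! := by
    intro k
    rw [← intervalIntegral.integral_of_le ht.1]
    have : (∫ s in T..t, F k s) = (∫ s in T..t, b s * (∫ u in T..s, b u) ^ k) / k ! := by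
      rw [hF, intervalIntegral.integral_div]
    rw [this]
    have hp := pow_rule hT hb k t ht
    have hk1 : (0:ℝ) < (k:ℝ) + 1 := by positivity
    have hkf : (0:ℝ) < (k ! : ℝ) := by positivity
    have hfact : ((k+1)! : ℝ) = ((k:ℝ)+1) * (k ! : ℝ) := by
      rw [Nat.factorial_succ]; push_cast; ring
    rw [hfact]
    rw [eq_div_iff (by positivity)]
    field_simp
    nlinarith [hp]
  have h2 : HasSum (fun k : ℕ => (∫ s in T..t, b s) ^ (k+1) / (k+1)!)
      (Real.exp (∫ s in T..t, b s) - 1) := by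
    have h1 := hexp (∫ s in T..t, b s)
    refine (hasSum_nat_add_iff (f := fun k : ℕ => (∫ s in T..t, b s) ^ k / k !) 1).2 ?_
    simpa using h1
  have hfun : (fun k : ℕ => ∫ s, F k s ∂(volume.restrict (Ioc T t)))
      = fun k : ℕ => (∫ s in T..t, b s) ^ (k+1) / (k+1)! := funext hterm
  rw [hfun] at hsum
  have hval : (∫ s, (∑' k : ℕ, F k s) ∂(volume.restrict (Ioc T t)))
      = Real.exp (∫ s in T..t, b s) - 1 := hsum.unique h2
  have hval2 : (∫ s, (∑' k : ℕ, F k s) ∂(volume.restrict (Ioc T t)))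
      = ∫ s in T..t, b s * Real.exp (∫ u in T..s, b u) := by
    rw [← intervalIntegral.integral_of_le ht.1]
    apply intervalIntegral.integral_congr
    intro s _
    exact htsum s
  linarith [hval, hval2.symm]

/-- Gronwall inequality with integrable coefficient on `[T,0]`. -/
lemma gron {T : ℝ} (hT : T ≤ 0) {b g ρ : ℝ → ℝ}
    (hb : IntervalIntegrable b volume T 0) (hgint : IntervalIntegrable g volume T 0)
    (hρ : ∀ t ∈ Icc T (0:ℝ), ρ t = ρ T + ∫ s in T..t, g s)
    (hbound : ∀ᵐ s ∂(volume : Measure ℝ), s ∈ Icc T (0:ℝ) → g s ≤ b s * ρ s) :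
    ρ 0 ≤ ρ T * Real.exp (∫ s in T..0, b s) := by
  have hIcc0 : (0:ℝ) ∈ Icc T (0:ℝ) := ⟨hT, le_rfl⟩
  have hnb : IntervalIntegrable (fun s => -b s) volume T 0 := hb.neg
  set Φ : ℝ → ℝ := fun s => Real.exp (∫ u in T..s, -b u) with hΦdef
  have hΦ : ∀ t ∈ Icc T (0:ℝ), Φ t = 1 + ∫ s in T..t, -b s * Φ s := by
    intro t ht
    have := exp_rule hT hnb t ht
    simpa [hΦdef] using this
  have hnBcont : ContinuousOn (fun s => ∫ u in T..s, -b u) (Icc T 0) := by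
    have := intervalIntegral.continuousOn_primitive_interval
      (f := fun u => -b u) (a := T) (b := (0:ℝ)) (μ := volume) ?_
    · rwa [uIcc_of_le hT] at this
    · rw [uIcc_of_le hT, integrableOn_Icc_iff_integrableOn_Ioc]
      exact (intervalIntegrable_iff_integrableOn_Ioc_of_le hT).1 hnb
  have hΦcont : ContinuousOn Φ (Icc T 0) := Real.continuous_exp.comp_continuousOn hnBcont
  have hh : IntervalIntegrable (fun s => -b s * Φ s) volume T 0 :=
    hnb.mul_continuousOn (by rwa [uIcc_of_le hT])
  have key := prod_rule' hT hgint hh (ρ T) 1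
  have hL : (ρ T + ∫ s in T..0, g s) * (1 + ∫ s in T..0, -b s * Φ s) = ρ 0 * Φ 0 := by
    rw [← hρ 0 hIcc0, ← hΦ 0 hIcc0]
  have hcongr : (∫ s in T..0,
        (g s * (1 + ∫ u in T..s, -b u * Φ u) + (ρ T + ∫ u in T..s, g u) * (-b s * Φ s)))
      = ∫ s in T..0, (g s - b s * ρ s) * Φ s := by
    apply intervalIntegral.integral_congr
    intro s hs
    have hsI : s ∈ Icc T (0:ℝ) := by rwa [uIcc_of_le hT] at hs
    beta_reduce
    rw [← hΦ s hsI, ← hρ s hsI]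
    ring
  have hle : (∫ s in T..0, (g s - b s * ρ s) * Φ s) ≤ 0 := by
    rw [intervalIntegral.integral_of_le hT]
    apply integral_nonpos_of_ae
    have h1 : ∀ᵐ s ∂(volume.restrict (Ioc T (0:ℝ))), s ∈ Icc T (0:ℝ) → g s ≤ b s * ρ s :=
      ae_restrict_of_ae hbound
    have h2 : ∀ᵐ s ∂(volume.restrict (Ioc T (0:ℝ))), s ∈ Ioc T (0:ℝ) :=
      ae_restrict_mem measurableSet_Ioc
    filter_upwards [h1, h2] with s hs1 hs2
    have hgs := hs1 (Ioc_subset_Icc_self hs2)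
    exact mul_nonpos_of_nonpos_of_nonneg (by linarith) (Real.exp_pos _).le
  have hmain : ρ 0 * Φ 0 ≤ ρ T := by
    rw [← hL, key, hcongr]
    linarith [hle]
  have hΦ0 : Φ 0 = Real.exp (-(∫ s in T..0, b s)) := by
    rw [hΦdef]
    beta_reduce
    rw [intervalIntegral.integral_neg]
  have : ρ 0 = ρ 0 * Φ 0 * Real.exp (∫ s in T..0, b s) := by
    rw [hΦ0, mul_assoc, ← Real.exp_add]
    simp
  rw [this]
  exact mul_le_mul_of_nonneg_right hmain (Real.exp_pos _).le

end BGLE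

/-- Backward Gronwall estimate with logarithmic envelope (quantitative core of
Lemma 11.1, part 2). The domain is `[T,0]` with `T < 0`. Absolute continuity of
`ρ` with `ρ' ≤ (-c₁ + c·a) ρ` a.e. is expressed in integral form:
`ρ t = ρ T + ∫_T^t g` with `g s ≤ (-c₁ + c·a s) ρ s` for a.e. `s ∈ [T,0]`. -/
theorem backward_gronwall_log_envelope
    (c₁ c C₁ n : ℝ) (hc₁ : 0 ≤ c₁) (hc : 0 ≤ c) (hC₁ : 0 ≤ C₁) (hn : 0 ≤ n)
    (T : ℝ) (hT : T < 0)
    (a g ρ : ℝ → ℝ)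
    (ha_nonneg : ∀ t ∈ Icc T 0, 0 ≤ a t)
    (ha_int : IntervalIntegrable a volume T 0)
    (ha_bound : ∀ t ∈ Icc T 0,
      (∫ s in t..(0:ℝ), a s) ≤ C₁ * |t| + n * (1 + Real.log (1 + |t|)))
    (hρ_nonneg : ∀ t ∈ Icc T 0, 0 ≤ ρ t)
    (hg_int : IntervalIntegrable g volume T 0)
    (hρ_ac : ∀ t ∈ Icc T 0, ρ t = ρ T + ∫ s in T..t, g s)
    (hg_bound : ∀ᵐ s ∂(volume : Measure ℝ),
      s ∈ Icc T 0 → g s ≤ (-c₁ + c * a s) * ρ s) :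
    ρ 0 ≤ ρ T * Real.exp (c * n) * (1 + |T|) ^ (c * n) *
      Real.exp (-(c₁ - c * C₁) * |T|) := by
  have hb : IntervalIntegrable (fun s => -c₁ + c * a s) volume T 0 :=
    (intervalIntegrable_const (c := -c₁)).add (ha_int.const_mul c)
  have key := BGLE.gron hT.le hb hg_int hρ_ac hg_bound
  have hib : (∫ s in T..0, (-c₁ + c * a s)) = c₁ * T + c * ∫ s in T..0, a s := by
    rw [intervalIntegral.integral_add (intervalIntegrable_const (c := -c₁))
      (ha_int.const_mul c), intervalIntegral.integral_const,
      intervalIntegral.integral_const_mul]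
    simp
    ring
  have haT := ha_bound T ⟨le_rfl, hT.le⟩
  have habs : |T| = -T := abs_of_neg hT
  have hexp_le : Real.exp (∫ s in T..0, (-c₁ + c * a s))
      ≤ Real.exp (c * n) * (1 + |T|) ^ (c * n) * Real.exp (-(c₁ - c * C₁) * |T|) := by
    rw [Real.rpow_def_of_pos (by positivity), ← Real.exp_add, ← Real.exp_add,
      Real.exp_le_exp, hib]
    have hmul := mul_le_mul_of_nonneg_left haT hc
    rw [habs] at hmul ⊢
    nlinarith [hmul]
  calc ρ 0 ≤ ρ T * Real.exp (∫ s in T..0, (-c₁ + c * a s)) := key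
    _ ≤ ρ T * (Real.exp (c * n) * (1 + |T|) ^ (c * n) *
        Real.exp (-(c₁ - c * C₁) * |T|)) :=
      mul_le_mul_of_nonneg_left hexp_le (hρ_nonneg T ⟨le_rfl, hT.le⟩)
    _ = ρ T * Real.exp (c * n) * (1 + |T|) ^ (c * n) *
        Real.exp (-(c₁ - c * C₁) * |T|) := by ring
end

section
/- Backward uniqueness under a logarithmic envelope (the core of the uniqueness argument of Theorem 7.4): Assume γ := c₁ − cC₁ > 0. Let a : (−∞,0] → [0,∞) be locally integrable with ∫ₜ⁰ a(s) ds ≤ C₁|t| + n(1 + log(1+|t|)) for all t ≤ 0, and let ρ : (−∞,0] → [0,∞) be absolutely continuous with ρ′(t) ≤ (−c₁ + c·a(t)) ρ(t) for almost every t ≤ 0. If moreover there is a constant E₀ ≥ 0 such that ρ(t)² ≤ 4(E₀ + n(1 + log(1+|t|))) for all t ≤ 0, then ρ(0) = 0. -/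
open MeasureTheory Set intervalIntegral Filter

set_option maxHeartbeats 2000000

lemma scalar_exp_bound (x ε h : ℝ) (hx : 0 ≤ x) (hε0 : 0 ≤ ε) (hdef : x + ε = h)
    (hh : h ≤ 1/2) :
    1/(1 + x) + ε/(1 - ε) ≤ Real.exp (-h + 2*ε + 3*h^2) := by
  have hε : ε ≤ 1/2 := by linarith
  have hP : (0:ℝ) < 1 + x := by linarith
  have hQ : (0:ℝ) < 1 - ε := by linarith
  have e1 : 1/(1 + x) ≤ 1 - x + x^2 := by
    rw [div_le_iff₀ hP]; nlinarith
  have e2 : ε/(1 - ε) ≤ ε + 2*ε^2 := by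
    rw [div_le_iff₀ hQ]; nlinarith
  have e3 : 1 + (-h + 2*ε + 3*h^2) ≤ Real.exp (-h + 2*ε + 3*h^2) := by
    linarith [Real.add_one_le_exp (-h + 2*ε + 3*h^2)]
  nlinarith [sq_nonneg x, sq_nonneg ε, sq_nonneg (x - ε)]

lemma piece_step (c₁ c : ℝ) (hc₁ : 0 ≤ c₁) (hc : 0 ≤ c) (a g ρ : ℝ → ℝ)
    (u v : ℝ) (huv : u ≤ v)
    (ha_nonneg : ∀ x ∈ Icc u v, 0 ≤ a x)
    (ha_int : IntervalIntegrable a volume u v)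
    (hρ_nonneg : ∀ x ∈ Icc u v, 0 ≤ ρ x)
    (hρ_cont : ContinuousOn ρ (Icc u v))
    (hg_int : IntervalIntegrable g volume u v)
    (hac : ∀ x y, u ≤ x → x ≤ y → y ≤ v → ρ y = ρ x + ∫ r in x..y, g r)
    (hg_bound : ∀ᵐ s ∂(volume.restrict (Icc u v)), g s ≤ (-c₁ + c * a s) * ρ s)
    (ε : ℝ) (hε_def : ε = c * ∫ s in u..v, a s) (hε : ε ≤ 1/2) :
    ρ v ≤ ρ u * (1/(1 + c₁*(v-u)) + ε/(1-ε)) := by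
  have hne : (Icc u v).Nonempty := nonempty_Icc.2 huv
  obtain ⟨xM, hxM, hmax⟩ := isCompact_Icc.exists_isMaxOn hne hρ_cont
  obtain ⟨xm, hxm, hmin⟩ := isCompact_Icc.exists_isMinOn hne hρ_cont
  set S := ρ xM with hS
  set s₀ := ρ xm with hs₀
  have hS_le : ∀ x ∈ Icc u v, ρ x ≤ S := fun x hx => hmax hx
  have hs_le : ∀ x ∈ Icc u v, s₀ ≤ ρ x := fun x hx => hmin hx
  have huIcc : u ∈ Icc u v := ⟨le_refl u, huv⟩
  have hvIcc : v ∈ Icc u v := ⟨huv, le_refl v⟩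
  have hS0 : 0 ≤ S := le_trans (hρ_nonneg u huIcc) (hS_le u huIcc)
  have hs0 : 0 ≤ s₀ := hρ_nonneg xm hxm
  have hε0 : 0 ≤ ε := by
    rw [hε_def]
    exact mul_nonneg hc (intervalIntegral.integral_nonneg huv (fun x hx => ha_nonneg x hx))
  -- auxiliary: subinterval integrability
  have hsub : ∀ x y : ℝ, u ≤ x → x ≤ y → y ≤ v → Set.uIcc x y ⊆ Set.uIcc u v := by
    intro x y hux hxy hyv
    rw [uIcc_of_le hxy, uIcc_of_le huv]
    exact Icc_subset_Icc hux hyv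
  -- key claim
  have claim : ∀ x y : ℝ, u ≤ x → x ≤ y → y ≤ v →
      (∫ r in x..y, g r) ≤ -c₁ * (∫ r in x..y, ρ r) + ε * S := by
    intro x y hux hxy hyv
    have hIccsub : Icc x y ⊆ Icc u v := Icc_subset_Icc hux hyv
    have huxy := hsub x y hux hxy hyv
    have hgi : IntervalIntegrable g volume x y := hg_int.mono_set huxy
    have hai : IntervalIntegrable a volume x y := ha_int.mono_set huxy
    have hρc : ContinuousOn ρ (Set.uIcc x y) := hρ_cont.mono (by rw [uIcc_of_le hxy]; exact hIccsub)
    have hρi : IntervalIntegrable ρ volume x y := hρc.intervalIntegrable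
    have haρi : IntervalIntegrable (fun r => a r * ρ r) volume x y := hai.mul_continuousOn hρc
    have hφi : IntervalIntegrable (fun r => (-c₁ + c * a r) * ρ r) volume x y := by
      have : IntervalIntegrable (fun r => (-c₁ : ℝ) + c * a r) volume x y :=
        intervalIntegrable_const.add (hai.const_mul c)
      exact this.mul_continuousOn hρc
    have hbd : ∀ᵐ r ∂(volume.restrict (Icc x y)), g r ≤ (-c₁ + c * a r) * ρ r :=
      ae_restrict_of_ae_restrict_of_subset hIccsub hg_bound
    have step1 : (∫ r in x..y, g r) ≤ ∫ r in x..y, (-c₁ + c * a r) * ρ r :=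
      intervalIntegral.integral_mono_ae_restrict hxy hgi hφi hbd
    have step2 : (∫ r in x..y, (-c₁ + c * a r) * ρ r)
        = -c₁ * (∫ r in x..y, ρ r) + c * ∫ r in x..y, a r * ρ r := by
      rw [← intervalIntegral.integral_const_mul, ← intervalIntegral.integral_const_mul,
        ← intervalIntegral.integral_add (hρi.const_mul (-c₁)) (haρi.const_mul c)]
      congr 1; ext r; ring
    have step3 : (∫ r in x..y, a r * ρ r) ≤ S * ∫ r in x..y, a r := by
      rw [← intervalIntegral.integral_const_mul]
      refine intervalIntegral.integral_mono_on hxy haρi (hai.const_mul S) (fun r hr => ?_)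
      exact mul_le_mul_of_nonneg_left (hS_le r (hIccsub hr)) (ha_nonneg r (hIccsub hr)) |>.trans_eq
        (mul_comm _ _)
    have step4 : (∫ r in x..y, a r) ≤ ∫ r in u..v, a r := by
      have h1 : IntervalIntegrable a volume u x := ha_int.mono_set (hsub u x le_rfl hux (hxy.trans hyv))
      have h2 : IntervalIntegrable a volume y v := ha_int.mono_set (hsub y v (hux.trans hxy) hyv le_rfl)
      have e1 : (∫ r in u..x, a r) + ∫ r in x..y, a r = ∫ r in u..y, a r :=
        intervalIntegral.integral_add_adjacent_intervals h1 hai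
      have e2 : (∫ r in u..y, a r) + ∫ r in y..v, a r = ∫ r in u..v, a r :=
        intervalIntegral.integral_add_adjacent_intervals (h1.trans hai) h2
      have n1 : 0 ≤ ∫ r in u..x, a r :=
        intervalIntegral.integral_nonneg hux (fun r hr => ha_nonneg r (Icc_subset_Icc le_rfl (hxy.trans hyv) hr))
      have n2 : 0 ≤ ∫ r in y..v, a r :=
        intervalIntegral.integral_nonneg hyv (fun r hr => ha_nonneg r (Icc_subset_Icc (hux.trans hxy) le_rfl hr))
      linarith
    have : c * (∫ r in x..y, a r * ρ r) ≤ ε * S := by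
      calc c * (∫ r in x..y, a r * ρ r) ≤ c * (S * ∫ r in x..y, a r) :=
            mul_le_mul_of_nonneg_left step3 hc
        _ ≤ c * (S * ∫ r in u..v, a r) := by
            exact mul_le_mul_of_nonneg_left (mul_le_mul_of_nonneg_left step4 hS0) hc
        _ = ε * S := by rw [hε_def]; ring
    rw [step2] at step1
    refine le_trans step1 ?_
    linarith [this]
  -- nonnegativity of integrals of ρ on subintervals
  have hρint_nonneg : ∀ x y : ℝ, u ≤ x → x ≤ y → y ≤ v → 0 ≤ ∫ r in x..y, ρ r := by
    intro x y hux hxy hyv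
    exact intervalIntegral.integral_nonneg hxy (fun r hr => hρ_nonneg r (Icc_subset_Icc hux hyv hr))
  -- A : S ≤ ρ u + ε S
  have hA : S ≤ ρ u + ε * S := by
    have := hac u xM le_rfl hxM.1 hxM.2
    have h1 := claim u xM le_rfl hxM.1 hxM.2
    have h2 := hρint_nonneg u xM le_rfl hxM.1 hxM.2
    nlinarith [mul_nonneg hc₁ h2]
  -- B : ρ v ≤ s₀ + ε S
  have hB : ρ v ≤ s₀ + ε * S := by
    have := hac xm v hxm.1 hxm.2 le_rfl
    have h1 := claim xm v hxm.1 hxm.2 le_rfl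
    have h2 := hρint_nonneg xm v hxm.1 hxm.2 le_rfl
    nlinarith [mul_nonneg hc₁ h2]
  -- C : ρ v ≤ ρ u - c₁ (v-u) s₀ + ε S
  have hC : ρ v ≤ ρ u - c₁ * (v - u) * s₀ + ε * S := by
    have heq := hac u v le_rfl huv le_rfl
    have h1 := claim u v le_rfl huv le_rfl
    have hρc : ContinuousOn ρ (Set.uIcc u v) := by rw [uIcc_of_le huv]; exact hρ_cont
    have hρi : IntervalIntegrable ρ volume u v := hρc.intervalIntegrable
    have h2 : (v - u) * s₀ ≤ ∫ r in u..v, ρ r := by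
      have : (∫ _ in u..v, s₀) ≤ ∫ r in u..v, ρ r :=
        intervalIntegral.integral_mono_on huv intervalIntegrable_const hρi (fun r hr => hs_le r hr)
      simpa [intervalIntegral.integral_const, smul_eq_mul] using this
    nlinarith [mul_le_mul_of_nonneg_left h2 hc₁]
  -- combine
  have hQ : (0:ℝ) < 1 - ε := by linarith
  have hP : (0:ℝ) < 1 + c₁ * (v - u) := by nlinarith [mul_nonneg hc₁ (sub_nonneg.2 huv)]
  have hSQ : S ≤ ρ u / (1 - ε) := by
    rw [le_div_iff₀ hQ]; nlinarith
  have hεS : ε * S ≤ ρ u * (ε / (1 - ε)) := by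
    calc ε * S ≤ ε * (ρ u / (1 - ε)) := mul_le_mul_of_nonneg_left hSQ hε0
      _ = ρ u * (ε / (1 - ε)) := by ring
  rcases le_or_gt s₀ (ρ u / (1 + c₁ * (v - u))) with hcase | hcase
  · calc ρ v ≤ s₀ + ε * S := hB
      _ ≤ ρ u / (1 + c₁ * (v - u)) + ρ u * (ε / (1 - ε)) := by linarith
      _ = ρ u * (1/(1 + c₁*(v-u)) + ε/(1-ε)) := by ring
  · have key : ρ u - c₁ * (v - u) * s₀ ≤ ρ u / (1 + c₁ * (v - u)) := by
      rw [sub_le_iff_le_add, ← sub_le_iff_le_add']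
      have : ρ u - ρ u / (1 + c₁ * (v - u)) = c₁ * (v - u) * (ρ u / (1 + c₁ * (v - u))) := by
        field_simp; ring
      rw [this]
      exact mul_le_mul_of_nonneg_left hcase.le (mul_nonneg hc₁ (sub_nonneg.2 huv))
    calc ρ v ≤ ρ u - c₁ * (v - u) * s₀ + ε * S := hC
      _ ≤ ρ u / (1 + c₁ * (v - u)) + ρ u * (ε / (1 - ε)) := by linarith
      _ = ρ u * (1/(1 + c₁*(v-u)) + ε/(1-ε)) := by ring


/-- Backward uniqueness under a logarithmic envelope (the core of the
uniqueness argument of Theorem 7.4). Here `γ := c₁ - c C₁ > 0`, `a` satisfies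
the logarithmic-envelope integral bound on each `[t,0]`, `ρ` is absolutely
continuous on `(-∞,0]` with `ρ' ≤ (-c₁ + c·a) ρ` a.e. (expressed in integral
form via `g`), and `ρ(t)² ≤ 4(E₀ + n(1 + log(1+|t|)))`; then `ρ(0) = 0`. -/
theorem backward_uniqueness_log_envelope
    (c₁ c C₁ n : ℝ) (hc₁ : 0 ≤ c₁) (hc : 0 ≤ c) (hC₁ : 0 ≤ C₁) (hn : 0 ≤ n)
    (hγ : 0 < c₁ - c * C₁)
    (a g ρ : ℝ → ℝ)
    (ha_nonneg : ∀ t ≤ (0:ℝ), 0 ≤ a t)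
    (ha_int : ∀ t ≤ (0:ℝ), IntervalIntegrable a volume t 0)
    (ha_bound : ∀ t ≤ (0:ℝ),
      (∫ s in t..(0:ℝ), a s) ≤ C₁ * |t| + n * (1 + Real.log (1 + |t|)))
    (hρ_nonneg : ∀ t ≤ (0:ℝ), 0 ≤ ρ t)
    (hg_int : ∀ t ≤ (0:ℝ), IntervalIntegrable g volume t 0)
    (hρ_ac : ∀ s t : ℝ, s ≤ t → t ≤ 0 → ρ t = ρ s + ∫ r in s..t, g r)
    (hg_bound : ∀ᵐ s ∂(volume : Measure ℝ),
      s ≤ (0:ℝ) → g s ≤ (-c₁ + c * a s) * ρ s)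
    (E₀ : ℝ) (hE₀ : 0 ≤ E₀)
    (hρ_bound : ∀ t ≤ (0:ℝ), (ρ t) ^ 2 ≤ 4 * (E₀ + n * (1 + Real.log (1 + |t|)))) :
    ρ 0 = 0 := by
  have hc₁pos : 0 < c₁ := by nlinarith [mul_nonneg hc hC₁]
  have key : ∀ x : ℝ, 0 ≤ x →
      ρ 0 ≤ ρ (-x) * Real.exp (-c₁*x + c * (∫ s in (-x)..(0:ℝ), a s) + 1) := by
    intro x hx
    set t : ℝ := -x with htdef
    have ht : t ≤ 0 := by simp [htdef]; linarith
    set A : ℝ := ∫ s in t..(0:ℝ), a s with hAdef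
    have hA0 : 0 ≤ A := intervalIntegral.integral_nonneg ht (fun s hs => ha_nonneg s hs.2)
    rcases eq_or_lt_of_le hx with hx0 | hxpos
    · -- x = 0 case
      have hxx : x = 0 := hx0.symm
      subst hxx
      have h0 : ρ 0 ≤ ρ 0 * Real.exp (-c₁*0 + c * A + 1) := by
        have h1 : (1:ℝ) ≤ Real.exp (-c₁*0 + c * A + 1) := by
          rw [Real.one_le_exp_iff]
          nlinarith [mul_nonneg hc hA0]
        nlinarith [hρ_nonneg 0 le_rfl]
      simpa [htdef] using h0
    -- main case x > 0
    set T : ℝ := c₁*x + c*A with hTdef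
    have hT : 0 < T := by nlinarith [mul_nonneg hc hA0]
    set m : ℕ := ⌈2*T⌉₊ + ⌈3*T^2⌉₊ + 1 with hmdef
    have hm0 : 0 < m := by omega
    have hm0' : (0:ℝ) < (m:ℝ) := by exact_mod_cast hm0
    have hm2T : 2*T ≤ (m:ℝ) := by
      have := Nat.le_ceil (2*T)
      have h2 : ((⌈2*T⌉₊ : ℕ) : ℝ) ≤ (m:ℝ) := by
        have : ⌈2*T⌉₊ ≤ m := by omega
        exact_mod_cast this
      linarith
    have hm3T : 3*T^2 ≤ (m:ℝ) := by
      have := Nat.le_ceil (3*T^2)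
      have h2 : ((⌈3*T^2⌉₊ : ℕ) : ℝ) ≤ (m:ℝ) := by
        have : ⌈3*T^2⌉₊ ≤ m := by omega
        exact_mod_cast this
      linarith
    set h : ℝ := T / m with hhdef
    have hh0 : 0 < h := div_pos hT hm0'
    have hmh : (m:ℝ) * h = T := by rw [hhdef]; field_simp [hm0'.ne']
    have hh : h ≤ 1/2 := by
      rw [hhdef, div_le_iff₀ hm0']; linarith
    -- subinterval integrability of a and g
    have hsub : ∀ z w : ℝ, t ≤ z → z ≤ w → w ≤ 0 → Set.uIcc z w ⊆ Set.uIcc t 0 := by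
      intro z w h1 h2 h3
      rw [uIcc_of_le h2, uIcc_of_le ht]
      exact Icc_subset_Icc h1 h3
    have hai : ∀ z w : ℝ, t ≤ z → z ≤ w → w ≤ 0 → IntervalIntegrable a volume z w :=
      fun z w h1 h2 h3 => (ha_int t ht).mono_set (hsub z w h1 h2 h3)
    have hgi : ∀ z w : ℝ, t ≤ z → z ≤ w → w ≤ 0 → IntervalIntegrable g volume z w :=
      fun z w h1 h2 h3 => (hg_int t ht).mono_set (hsub z w h1 h2 h3)
    -- Φ
    set Φ : ℝ → ℝ := fun z => c₁*(z - t) + c * ∫ s in t..z, a s with hΦdef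
    have hΦt : Φ t = 0 := by simp [hΦdef]
    have hΦ0 : Φ 0 = T := by simp [hΦdef, hTdef, htdef]; exact Or.inl rfl
    have hΦcont : ContinuousOn Φ (Icc t 0) := by
      have h1 : ContinuousOn (fun z => ∫ s in t..z, a s) (Icc t 0) := by
        have := intervalIntegral.continuousOn_primitive_interval' (ha_int t ht)
          (left_mem_uIcc (a := t) (b := 0))
        rwa [uIcc_of_le ht] at this
      exact ((continuous_const.mul (continuous_id.sub continuous_const)).continuousOn).add
        (continuousOn_const.mul h1)
    have hΦdiff : ∀ z w, t ≤ z → z ≤ w → w ≤ 0 →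
        Φ w - Φ z = c₁*(w - z) + c * ∫ s in z..w, a s := by
      intro z w h1 h2 h3
      have e := intervalIntegral.integral_add_adjacent_intervals
        (hai t z le_rfl h1 (h2.trans h3)) (hai z w h1 h2 h3)
      simp only [hΦdef]
      nlinarith [e]
    have hle : ∀ z w, z ∈ Icc t 0 → w ∈ Icc t 0 → Φ z ≤ Φ w → z ≤ w := by
      intro z w hz hw hΦzw
      by_contra hcon
      push_neg at hcon
      have hd := hΦdiff w z hw.1 hcon.le hz.2
      have hintnn : 0 ≤ ∫ s in w..z, a s :=
        intervalIntegral.integral_nonneg hcon.le (fun s hs => ha_nonneg s (hs.2.trans hz.2))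
      nlinarith [mul_nonneg hc hintnn]
    -- partition
    have hexists : ∀ i : ℕ, ∃ z ∈ Icc t 0, Φ z = min ((i:ℝ)*h) T := by
      intro i
      have hmem : min ((i:ℝ)*h) T ∈ Icc (Φ t) (Φ 0) := by
        rw [hΦt, hΦ0]
        exact ⟨le_min (mul_nonneg (Nat.cast_nonneg i) hh0.le) hT.le, min_le_right _ _⟩
      obtain ⟨z, hz, hΦz⟩ := intermediate_value_Icc ht hΦcont hmem
      exact ⟨z, hz, hΦz⟩
    choose U hU hΦU using hexists
    have hΦUi : ∀ i : ℕ, i ≤ m → Φ (U i) = (i:ℝ)*h := by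
      intro i him
      rw [hΦU i, min_eq_left]
      calc (i:ℝ)*h ≤ (m:ℝ)*h := by
            apply mul_le_mul_of_nonneg_right _ hh0.le
            exact_mod_cast him
        _ = T := hmh
    have hU0 : U 0 = t := by
      refine le_antisymm (hle _ _ (hU 0) (left_mem_Icc.2 ht) ?_) (hU 0).1
      rw [hΦUi 0 (by omega), hΦt]; simp
    have hUm : U m = 0 := by
      refine le_antisymm (hU m).2 (hle _ _ (right_mem_Icc.2 ht) (hU m) ?_)
      rw [hΦUi m le_rfl, hΦ0, hmh]
    have hUmono : ∀ i : ℕ, i < m → U i ≤ U (i+1) := by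
      intro i hi
      apply hle _ _ (hU i) (hU (i+1))
      rw [hΦUi i hi.le, hΦUi (i+1) hi]
      have : (i:ℝ) ≤ (i:ℝ)+1 := by linarith
      push_cast
      nlinarith
    -- continuity of ρ
    have hρ_cont : ContinuousOn ρ (Icc t 0) := by
      have hprim : ContinuousOn (fun z => ρ t + ∫ r in t..z, g r) (Icc t 0) := by
        have := intervalIntegral.continuousOn_primitive_interval' (hg_int t ht)
          (left_mem_uIcc (a := t) (b := 0))
        rw [uIcc_of_le ht] at this
        exact continuousOn_const.add this
      exact hprim.congr (fun z hz => hρ_ac t z hz.1 hz.2)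
    -- per-piece exponential step
    have step : ∀ i : ℕ, i < m →
        ρ (U (i+1)) ≤ ρ (U i) *
          Real.exp (-h + 2*(c * ∫ s in (U i)..(U (i+1)), a s) + 3*h^2) := by
      intro i hi
      set x' := U i with hx'
      set y' := U (i+1) with hy'
      have hx'm : x' ∈ Icc t 0 := hU i
      have hy'm : y' ∈ Icc t 0 := hU (i+1)
      have hxy' : x' ≤ y' := hUmono i hi
      set εi : ℝ := c * ∫ s in x'..y', a s with hεidef
      have hεi0 : 0 ≤ εi :=
        mul_nonneg hc (intervalIntegral.integral_nonneg hxy'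
          (fun s hs => ha_nonneg s (hs.2.trans hy'm.2)))
      have hεi_h : c₁*(y'-x') + εi = h := by
        have hd := hΦdiff x' y' hx'm.1 hxy' hy'm.2
        rw [hΦUi i hi.le, hΦUi (i+1) hi] at hd
        push_cast at hd
        linarith
      have hδ0 : 0 ≤ c₁*(y'-x') := mul_nonneg hc₁pos.le (by linarith)
      have hεih : εi ≤ 1/2 := by linarith
      have hps := piece_step c₁ c hc₁pos.le hc a g ρ x' y' hxy'
        (fun z hz => ha_nonneg z (hz.2.trans hy'm.2))
        (hai x' y' hx'm.1 hxy' hy'm.2)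
        (fun z hz => hρ_nonneg z (hz.2.trans hy'm.2))
        (hρ_cont.mono (Icc_subset_Icc hx'm.1 hy'm.2))
        (hgi x' y' hx'm.1 hxy' hy'm.2)
        (fun z w h1 h2 h3 => hρ_ac z w h2 (h3.trans hy'm.2))
        (by
          filter_upwards [ae_restrict_of_ae hg_bound,
            ae_restrict_mem (measurableSet_Icc (a := x') (b := y'))] with s h1 h2
          exact h1 (h2.2.trans hy'm.2))
        εi hεidef hεih
      have hsb := scalar_exp_bound (c₁*(y'-x')) εi h hδ0 hεi0 hεi_h hh
      calc ρ y' ≤ ρ x' * (1/(1 + c₁*(y'-x')) + εi/(1-εi)) := hps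
        _ ≤ ρ x' * Real.exp (-h + 2*εi + 3*h^2) :=
            mul_le_mul_of_nonneg_left hsb (hρ_nonneg x' (hx'm.2))
    -- induction
    have claim2 : ∀ i : ℕ, i ≤ m →
        ρ (U i) ≤ ρ t * Real.exp ((i:ℝ)*(-h+3*h^2) + 2*c*(∫ s in t..(U i), a s)) := by
      intro i
      induction i with
      | zero =>
        intro _
        rw [hU0]
        simp
      | succ i ih =>
        intro him
        have hi : i < m := by omega
        have h1 := step i hi
        have h2 := ih (by omega)
        have hexp0 : (0:ℝ) ≤ Real.exp (-h + 2*(c * ∫ s in (U i)..(U (i+1)), a s) + 3*h^2) :=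
          (Real.exp_pos _).le
        have h3 : ρ (U (i+1)) ≤
            (ρ t * Real.exp ((i:ℝ)*(-h+3*h^2) + 2*c*(∫ s in t..(U i), a s))) *
            Real.exp (-h + 2*(c * ∫ s in (U i)..(U (i+1)), a s) + 3*h^2) :=
          h1.trans (mul_le_mul_of_nonneg_right h2 hexp0)
        have hadd : (∫ s in t..(U i), a s) + (∫ s in (U i)..(U (i+1)), a s)
            = ∫ s in t..(U (i+1)), a s :=
          intervalIntegral.integral_add_adjacent_intervals
            (hai t (U i) le_rfl (hU i).1 (hU i).2)
            (hai (U i) (U (i+1)) (hU i).1 (hUmono i hi) (hU (i+1)).2)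
        calc ρ (U (i+1)) ≤ _ := h3
          _ = ρ t * Real.exp (((i:ℕ)+1:ℝ)*(-h+3*h^2) + 2*c*(∫ s in t..(U (i+1)), a s)) := by
              rw [mul_assoc, ← Real.exp_add]
              congr 1
              rw [← hadd]
              push_cast
              ring
          _ = ρ t * Real.exp (((i+1:ℕ):ℝ)*(-h+3*h^2) + 2*c*(∫ s in t..(U (i+1)), a s)) := by
              norm_cast
    -- conclude
    have hfinal := claim2 m le_rfl
    rw [hUm] at hfinal
    have hexp_le : (m:ℝ)*(-h+3*h^2) + 2*c*A ≤ -c₁*x + c*A + 1 := by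
      have h3hT : 3*h*T ≤ 1 := by
        have : 3*h*T = 3*T^2/m := by rw [hhdef]; field_simp
        rw [this, div_le_one hm0']
        linarith
      have e1 : (m:ℝ)*(-h+3*h^2) = -T + 3*h*T := by
        have : (m:ℝ)*(3*h^2) = 3*h*((m:ℝ)*h) := by ring
        nlinarith [hmh]
      rw [e1]
      rw [hTdef] at *
      linarith
    calc ρ 0 ≤ ρ t * Real.exp ((m:ℝ)*(-h+3*h^2) + 2*c*A) := hfinal
      _ ≤ ρ t * Real.exp (-c₁*x + c*A + 1) :=
          mul_le_mul_of_nonneg_left (Real.exp_le_exp.2 hexp_le) (hρ_nonneg t ht)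
  set γ : ℝ := c₁ - c * C₁ with hγdef
  set N : ℕ := ⌈c*n⌉₊ + 1 with hNdef
  set K : ℝ := (E₀ + n + 1) * Real.exp (c*n + 1) with hKdef
  have hK0 : 0 ≤ K := by positivity
  have bound : ∀ x : ℝ, 0 ≤ x → ρ 0 ≤ K * (1+x)^N * Real.exp (-γ*x) := by
    intro x hx
    have ht : -x ≤ (0:ℝ) := by linarith
    have h1x : (0:ℝ) < 1 + x := by linarith
    set L : ℝ := Real.log (1+x) with hLdef
    have hL0 : 0 ≤ L := Real.log_nonneg (by linarith)
    have hLx : L ≤ x := by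
      have := Real.log_le_sub_one_of_pos h1x
      linarith
    have habs : |(-x : ℝ)| = x := by rw [abs_neg, abs_of_nonneg hx]
    have hAb : (∫ s in (-x)..(0:ℝ), a s) ≤ C₁*x + n*(1+L) := by
      have := ha_bound (-x) ht
      rwa [habs] at this
    have hρt : ρ (-x) ≤ E₀ + n*(1+L) + 1 := by
      have h1 := hρ_bound (-x) ht
      rw [habs] at h1
      nlinarith [hρ_nonneg (-x) ht, sq_nonneg (ρ (-x) - 2)]
    have hρt0 : (0:ℝ) ≤ E₀ + n*(1+L) + 1 := by nlinarith
    have hexp1 : -c₁*x + c * (∫ s in (-x)..(0:ℝ), a s) + 1 ≤ -γ*x + c*n*(1+L) + 1 := by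
      have := mul_le_mul_of_nonneg_left hAb hc
      rw [hγdef]; nlinarith
    have step1 : ρ 0 ≤ (E₀ + n*(1+L) + 1) * Real.exp (-γ*x + c*n*(1+L) + 1) := by
      calc ρ 0 ≤ ρ (-x) * Real.exp (-c₁*x + c * (∫ s in (-x)..(0:ℝ), a s) + 1) := key x hx
        _ ≤ (E₀ + n*(1+L) + 1) * Real.exp (-γ*x + c*n*(1+L) + 1) :=
            mul_le_mul hρt (Real.exp_le_exp.2 hexp1) (Real.exp_pos _).le hρt0
    have hsplit : Real.exp (-γ*x + c*n*(1+L) + 1)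
        = Real.exp (c*n+1) * Real.exp (c*n*L) * Real.exp (-γ*x) := by
      rw [← Real.exp_add, ← Real.exp_add]; ring_nf
    have hB1 : E₀ + n*(1+L) + 1 ≤ (E₀ + n + 1) * (1+x) := by nlinarith
    have hB2 : Real.exp (c*n*L) ≤ (1+x)^(⌈c*n⌉₊ : ℕ) := by
      have h1 : c*n*L ≤ (⌈c*n⌉₊ : ℝ) * L :=
        mul_le_mul_of_nonneg_right (Nat.le_ceil _) hL0
      calc Real.exp (c*n*L) ≤ Real.exp ((⌈c*n⌉₊ : ℝ) * L) := Real.exp_le_exp.2 h1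
        _ = (Real.exp L)^(⌈c*n⌉₊ : ℕ) := by rw [← Real.exp_nat_mul]
        _ = (1+x)^(⌈c*n⌉₊ : ℕ) := by rw [hLdef, Real.exp_log h1x]
    calc ρ 0 ≤ (E₀ + n*(1+L) + 1) * Real.exp (-γ*x + c*n*(1+L) + 1) := step1
      _ = (E₀ + n*(1+L) + 1) * (Real.exp (c*n+1) * Real.exp (c*n*L)) * Real.exp (-γ*x) := by
          rw [hsplit]; ring
      _ ≤ ((E₀ + n + 1) * (1+x)) * (Real.exp (c*n+1) * (1+x)^(⌈c*n⌉₊ : ℕ)) * Real.exp (-γ*x) := by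
          apply mul_le_mul_of_nonneg_right _ (Real.exp_pos _).le
          apply mul_le_mul hB1 (mul_le_mul_of_nonneg_left hB2 (Real.exp_pos _).le)
            (by positivity) (by positivity)
      _ = K * (1+x)^N * Real.exp (-γ*x) := by
          rw [hKdef, hNdef, pow_succ]; ring
  -- limit
  have hγpos : (0:ℝ) < γ := hγ
  have htend : Tendsto (fun x : ℝ => K * (1+x)^N * Real.exp (-γ*x)) atTop (nhds 0) := by
    have h1 : Tendsto (fun z : ℝ => z^N * Real.exp (-z)) atTop (nhds 0) :=
      Real.tendsto_pow_mul_exp_neg_atTop_nhds_zero N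
    have h2 : Tendsto (fun x : ℝ => γ*(1+x)) atTop atTop := by
      apply Tendsto.const_mul_atTop hγpos
      exact tendsto_atTop_add_const_left _ 1 tendsto_id
    have h3 := h1.comp h2
    have h4 : (fun x : ℝ => K * (1+x)^N * Real.exp (-γ*x))
        = fun x : ℝ => (K * Real.exp γ / γ^N) * ((γ*(1+x))^N * Real.exp (-(γ*(1+x)))) := by
      funext x
      have he : Real.exp (-(γ*(1+x))) = Real.exp (-γ) * Real.exp (-γ*x) := by
        rw [← Real.exp_add]; ring_nf
      rw [he, mul_pow, Real.exp_neg]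
      have hγN : (γ:ℝ)^N ≠ 0 := by positivity
      field_simp
    rw [h4]
    simpa using (h3.const_mul (K * Real.exp γ / γ^N))
  have hle0 : ρ 0 ≤ 0 :=
    ge_of_tendsto htend (eventually_atTop.2 ⟨0, fun x hx => bound x hx⟩)
  exact le_antisymm hle0 (hρ_nonneg 0 le_rfl)
end

section
/- Propagation of equivalence through an initial-condition-insensitive kernel (the measure-theoretic core of Lemma 8.5): Let X, Y, Z be measurable spaces and m a σ-finite measure on X. Let R : X × Y → Measure(Z) be a measurable kernel such that for every x ∈ X and every y, y′ ∈ Y the measures R(x,y) and R(x,y′) are mutually absolutely continuous. For i = 1, 2 let μ_i be a finite measure on X × Y whose marginal on the first coordinate is mutually absolutely continuous with m, and set ν_i(A) = ∫_{X×Y} R(x,y)(A) dμ_i(x,y) for measurable A ⊆ Z. Then ν₁ and ν₂ are mutually absolutely continuous. -/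
open MeasureTheory ProbabilityTheory

lemma kernel_propagates_key
    {X Y Z : Type*} [MeasurableSpace X] [MeasurableSpace Y] [MeasurableSpace Z]
    (m : Measure X)
    (R : Kernel (X × Y) Z)
    (hR : ∀ (x : X) (y y' : Y), R (x, y) ≪ R (x, y'))
    (μ ν : Measure (X × Y))
    (hμ : m ≪ μ.map Prod.fst) (hν : ν.map Prod.fst ≪ m) :
    ν.bind (fun p => R p) ≪ μ.bind (fun p => R p) := by
  refine Measure.AbsolutelyContinuous.mk fun A hA hA0 => ?_
  rw [Measure.bind_apply hA R.measurable.aemeasurable] at hA0 ⊢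
  cases isEmpty_or_nonempty Y with
  | inl h =>
    have : ν = 0 := Subsingleton.elim ν 0
    simp [this]
  | inr h =>
    obtain ⟨y₀⟩ := h
    have h0 : ∀ᵐ p ∂μ, R p A = 0 := by
      rwa [lintegral_eq_zero_iff (R.measurable_coe hA)] at hA0
    set S : Set X := {x | R (x, y₀) A ≠ 0} with hS_def
    have hSmeas : MeasurableSet S := by
      have : Measurable fun x : X => R (x, y₀) A :=
        (R.measurable_coe hA).comp (measurable_id.prodMk measurable_const)
      exact (this (measurableSet_singleton 0)).compl
    have hset : ∀ p : X × Y, R p A = 0 ↔ R (p.1, y₀) A = 0 := by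
      intro p
      constructor
      · intro hp
        exact hR p.1 y₀ p.2 (by simpa using hp)
      · intro hp
        have := hR p.1 p.2 y₀ hp
        simpa using this
    have hTeq : {p : X × Y | R p A ≠ 0} = Prod.fst ⁻¹' S := by
      ext p
      simp only [hS_def, Set.mem_setOf_eq, Set.mem_preimage, ne_eq]
      exact not_congr (hset p)
    have hμT : μ (Prod.fst ⁻¹' S) = 0 := by
      rw [← hTeq]
      simpa [ae_iff] using h0
    have hμmap : μ.map Prod.fst S = 0 := by
      rwa [Measure.map_apply measurable_fst hSmeas]
    have hmS : m S = 0 := hμ hμmap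
    have hνmap : ν.map Prod.fst S = 0 := hν hmS
    have hνT : ν (Prod.fst ⁻¹' S) = 0 := by
      rwa [Measure.map_apply measurable_fst hSmeas] at hνmap
    have h0' : ∀ᵐ p ∂ν, R p A = 0 := by
      rw [ae_iff]
      simpa [hTeq] using hνT
    rw [lintegral_eq_zero_iff (R.measurable_coe hA)]
    exact h0'

/-- Propagation of equivalence through an initial-condition-insensitive kernel
(the measure-theoretic core of Lemma 8.5): if `R : X × Y → Measure Z` is a
measurable kernel with `R(x,y)` equivalent to `R(x,y')` for all `x, y, y'`, and
`μ₁, μ₂` are finite measures on `X × Y` whose first marginals are both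
equivalent to a σ-finite measure `m`, then the measures
`νᵢ = ∫ R(x,y) dμᵢ(x,y)` are mutually absolutely continuous. -/
theorem kernel_propagates_equivalence
    {X Y Z : Type*} [MeasurableSpace X] [MeasurableSpace Y] [MeasurableSpace Z]
    (m : Measure X) [SigmaFinite m]
    (R : Kernel (X × Y) Z)
    (hR : ∀ (x : X) (y y' : Y), R (x, y) ≪ R (x, y'))
    (μ₁ μ₂ : Measure (X × Y)) [IsFiniteMeasure μ₁] [IsFiniteMeasure μ₂]
    (h₁ : μ₁.map Prod.fst ≪ m ∧ m ≪ μ₁.map Prod.fst)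
    (h₂ : μ₂.map Prod.fst ≪ m ∧ m ≪ μ₂.map Prod.fst) :
    μ₁.bind (fun p => R p) ≪ μ₂.bind (fun p => R p) ∧
    μ₂.bind (fun p => R p) ≪ μ₁.bind (fun p => R p) := by
  constructor
  · exact kernel_propagates_key m R hR μ₂ μ₁ h₂.2 h₁.1
  · exact kernel_propagates_key m R hR μ₁ μ₂ h₁.2 h₂.1
end
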